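/- arXiv:0910.5435 — 4 statements merged into one kernel-verified Lean document; each statement's English description precedes it below -/
import Mathlib

section
/- For any nonnegative integer m and any integer l ≥ m, the normalized associated Legendre function P̄_l^m satisfies the Sturm–Liouville differential equation -d/dx((1-x²) d/dx P̄_l^m(x)) + (m²/(1-x²) - l(l+1)) P̄_l^m(x) = 0 for all x in (-1,1). -/
open scoped Nat

/-- The Legendre polynomial of degree `l`, via Rodrigues' formula. -/
noncomputable def legendreP (l : ℕ) : ℝ → ℝ := fun x =>
  (1 / (2 ^ l * (l ! : ℝ))) * iteratedDeriv l (fun y : ℝ => (y ^ 2 - 1) ^ l) x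

/-- The normalized associated Legendre function `P̄_l^m`. -/
noncomputable def nalf (m l : ℕ) : ℝ → ℝ := fun x =>
  Real.sqrt ((2 * l + 1) / 2 * ((l - m)! : ℝ) / ((l + m)! : ℝ)) *
    (1 - x ^ 2) ^ ((m : ℝ) / 2) * iteratedDeriv m (legendreP l) x

/-- The spectral (l²-operator) norm of a real matrix. -/
noncomputable def specNorm {α β : Type*} [Fintype α] [Fintype β] [DecidableEq α] [DecidableEq β]
    (A : Matrix α β ℝ) : ℝ :=
  ‖LinearMap.toContinuousLinearMap (Matrix.toEuclideanLin A)‖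

/-- The singular values of a real matrix, listed in decreasing order. -/
noncomputable def singularValues {p q : ℕ} (A : Matrix (Fin p) (Fin q) ℝ) : List ℝ :=
  List.insertionSort (· ≥ ·)
    (List.ofFn fun i => Real.sqrt ((Matrix.isHermitian_conjTranspose_mul_self A).eigenvalues i))

noncomputable def ccoef (m l : ℕ) : ℝ :=
  Real.sqrt ((((l : ℝ) - m + 1) * ((l : ℝ) - m + 2) * ((l : ℝ) + m + 1) * ((l : ℝ) + m + 2)) /
    ((2 * (l : ℝ) + 1) * (2 * (l : ℝ) + 3) ^ 2 * (2 * (l : ℝ) + 5)))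

noncomputable def dcoef (m l : ℕ) : ℝ :=
  (2 * (l : ℝ) * ((l : ℝ) + 1) - 2 * (m : ℝ) ^ 2 - 1) /
    ((2 * (l : ℝ) - 1) * (2 * (l : ℝ) + 3))

open Polynomial

noncomputable def uu (l : ℕ) : ℝ[X] := ((X : ℝ[X]) ^ 2 - 1) ^ l

lemma uu_base (l : ℕ) :
    ((X : ℝ[X]) ^ 2 - 1) * derivative (uu l) = C (2 * (l : ℝ)) * X * uu l := by
  cases l with
  | zero => simp [uu]
  | succ k =>
    rw [uu, derivative_pow]
    simp only [Nat.succ_sub_one, derivative_sub, derivative_one, derivative_X_pow, sub_zero]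
    push_cast
    simp only [C_add, C_mul, C_1, map_ofNat]
    rw [pow_succ]
    ring

lemma uu_rec (l : ℕ) : ∀ k : ℕ,
    ((X : ℝ[X]) ^ 2 - 1) * derivative^[k + 2] (uu l) =
      C (2 * ((l : ℝ) - k - 1)) * X * derivative^[k + 1] (uu l) +
        C (((k : ℝ) + 1) * (2 * l - k)) * derivative^[k] (uu l) := by
  intro k
  induction k with
  | zero =>
    have h := congrArg derivative (uu_base l)
    simp only [derivative_mul, derivative_sub, derivative_one, derivative_X_pow, derivative_C,
      derivative_X] at h
    simp only [Function.iterate_succ_apply', Function.iterate_zero_apply,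
      Function.iterate_one]
    push_cast at h ⊢
    simp only [C_add, C_sub, C_mul, C_1, C_0, map_ofNat] at h ⊢
    linear_combination h
  | succ k ih =>
    have e1 : derivative^[k + 1] (uu l) = derivative (derivative^[k] (uu l)) :=
      Function.iterate_succ_apply' derivative k (uu l)
    have e2 : derivative^[k + 2] (uu l) = derivative (derivative (derivative^[k] (uu l))) := by
      rw [show k + 2 = (k + 1) + 1 from rfl, Function.iterate_succ_apply', e1]
    have e3 : derivative^[k + 3] (uu l) =
        derivative (derivative (derivative (derivative^[k] (uu l)))) := by
      rw [show k + 3 = (k + 2) + 1 from rfl, Function.iterate_succ_apply', e2]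
    rw [e1, e2] at ih
    have h := congrArg derivative ih
    simp only [derivative_mul, derivative_sub, derivative_one, derivative_X_pow, derivative_C,
      derivative_add, derivative_X] at h
    rw [show k + 1 + 2 = k + 3 from rfl, show k + 1 + 1 = k + 2 from rfl, e1, e2, e3]
    push_cast at h ⊢
    simp only [C_add, C_sub, C_mul, C_1, C_0, map_ofNat] at h ⊢
    linear_combination h

lemma iter_deriv_eval (p : ℝ[X]) (n : ℕ) :
    iteratedDeriv n (fun x : ℝ => eval x p) = fun x => eval x (derivative^[n] p) := by
  induction n with
  | zero => simp only [iteratedDeriv_zero, Function.iterate_zero_apply]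
  | succ n ih =>
    rw [iteratedDeriv_succ, ih]
    funext x
    rw [Function.iterate_succ_apply']
    exact Polynomial.deriv (p := derivative^[n] p)

lemma nalf_eq (m l : ℕ) :
    nalf m l = fun x : ℝ =>
      (Real.sqrt ((2 * l + 1) / 2 * ((l - m)! : ℝ) / ((l + m)! : ℝ)) *
          (1 / (2 ^ l * (l ! : ℝ)))) *
        ((1 - x ^ 2) ^ ((m : ℝ) / 2) * eval x (derivative^[l + m] (uu l))) := by
  have hleg : legendreP l = fun x : ℝ => eval x (C (1 / (2 ^ l * (l ! : ℝ))) *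
      derivative^[l] (uu l)) := by
    funext x
    have h0 : (fun y : ℝ => (y ^ 2 - 1) ^ l) = fun y : ℝ => eval y (uu l) := by
      funext y; simp [uu]
    rw [legendreP, h0, iter_deriv_eval]
    simp
  funext x
  rw [nalf, hleg, iter_deriv_eval]
  have h1 : derivative^[m] (C (1 / (2 ^ l * (l ! : ℝ))) * derivative^[l] (uu l)) =
      C (1 / (2 ^ l * (l ! : ℝ))) * derivative^[l + m] (uu l) := by
    rw [show l + m = m + l from add_comm l m, Function.iterate_add_apply]
    induction m with
    | zero => simp
    | succ n ih =>
      rw [Function.iterate_succ_apply', Function.iterate_succ_apply', ih, derivative_C_mul]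
  rw [h1]
  simp only [eval_mul, eval_C]
  ring

lemma SL_key (p : ℝ[X]) (m : ℕ) (L : ℝ)
    (hode : ∀ y : ℝ, (y ^ 2 - 1) * eval y (derivative (derivative p)) =
      -(2 * (m : ℝ) + 2) * y * eval y (derivative p) + (L - m * (m + 1)) * eval y p)
    (x : ℝ) (hx : x ∈ Set.Ioo (-1 : ℝ) 1) :
    -deriv (fun y : ℝ => (1 - y ^ 2) *
        deriv (fun z : ℝ => (1 - z ^ 2) ^ ((m : ℝ) / 2) * eval z p) y) x
      + ((m : ℝ) ^ 2 / (1 - x ^ 2) - L) * ((1 - x ^ 2) ^ ((m : ℝ) / 2) * eval x p) = 0 := by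
  set r : ℝ := (m : ℝ) / 2 with hr
  have hsx : (0:ℝ) < 1 - x ^ 2 := by nlinarith [hx.1, hx.2]
  have hF : ∀ y ∈ Set.Ioo (-1 : ℝ) 1,
      HasDerivAt (fun z : ℝ => (1 - z ^ 2) ^ r * eval z p)
        ((-2 * y) * r * (1 - y ^ 2) ^ (r - 1) * eval y p +
          (1 - y ^ 2) ^ r * eval y (derivative p)) y := by
    intro y hy
    have hsy : (0:ℝ) < 1 - y ^ 2 := by nlinarith [hy.1, hy.2]
    have h1 : HasDerivAt (fun z : ℝ => 1 - z ^ 2) (-2 * y) y := by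
      simpa using ((hasDerivAt_pow 2 y).const_sub 1)
    have h2 : HasDerivAt (fun z : ℝ => (1 - z ^ 2) ^ r)
        ((-2 * y) * r * (1 - y ^ 2) ^ (r - 1)) y := h1.rpow_const (Or.inl hsy.ne')
    exact h2.mul (Polynomial.hasDerivAt p y)
  have hmemIoo : Set.Ioo (-1 : ℝ) 1 ∈ nhds x := (isOpen_Ioo).mem_nhds hx
  have heq : (fun y : ℝ => (1 - y ^ 2) *
        deriv (fun z : ℝ => (1 - z ^ 2) ^ r * eval z p) y) =ᶠ[nhds x]
      (fun y : ℝ => (1 - y ^ 2) ^ r *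
        (-2 * r * y * eval y p + (1 - y ^ 2) * eval y (derivative p))) := by
    filter_upwards [hmemIoo] with y hy
    have hsy : (0:ℝ) < 1 - y ^ 2 := by nlinarith [hy.1, hy.2]
    rw [(hF y hy).deriv]
    have hsub : (1 - y ^ 2) ^ (r - 1) = (1 - y ^ 2) ^ r / (1 - y ^ 2) := by
      rw [Real.rpow_sub hsy, Real.rpow_one]
    rw [hsub]
    field_simp
  rw [heq.deriv_eq]
  have h1 : HasDerivAt (fun z : ℝ => 1 - z ^ 2) (-2 * x) x := by
    simpa using ((hasDerivAt_pow 2 x).const_sub 1)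
  have hw : HasDerivAt (fun z : ℝ => (1 - z ^ 2) ^ r)
      ((-2 * x) * r * (1 - x ^ 2) ^ (r - 1)) x := h1.rpow_const (Or.inl hsx.ne')
  have hq : HasDerivAt (fun y : ℝ =>
      -2 * r * y * eval y p + (1 - y ^ 2) * eval y (derivative p))
      (-2 * r * eval x p + -2 * r * x * eval x (derivative p) +
        (-2 * x * eval x (derivative p) + (1 - x ^ 2) * eval x (derivative (derivative p)))) x := by
    have := (((hasDerivAt_id x).const_mul ((-2:ℝ)*r)).mul (Polynomial.hasDerivAt p x)).add
      (h1.mul (Polynomial.hasDerivAt (derivative p) x))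
    exact this.congr_deriv (by simp)
  rw [show deriv (fun y : ℝ => (1 - y ^ 2) ^ r *
      (-2 * r * y * eval y p + (1 - y ^ 2) * eval y (derivative p))) x = _ from (hw.mul hq).deriv]
  have hA : (1 - x ^ 2) ^ (r - 1) = (1 - x ^ 2) ^ r / (1 - x ^ 2) := by
    rw [Real.rpow_sub hsx, Real.rpow_one]
  rw [hA]
  have hm : (m : ℝ) = 2 * r := by rw [hr]; ring
  rw [hm]
  have h0 := hode x
  rw [hm] at h0
  field_simp
  linear_combination ((1 - x ^ 2) ^ r * (1 - x ^ 2)) * h0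

theorem sturm_liouville_nalf (m l : ℕ) (hml : m ≤ l) (x : ℝ)
    (hx : x ∈ Set.Ioo (-1 : ℝ) 1) :
    -deriv (fun y : ℝ => (1 - y ^ 2) * deriv (nalf m l) y) x
      + ((m : ℝ) ^ 2 / (1 - x ^ 2) - l * (l + 1)) * nalf m l x = 0 := by
  set c : ℝ := Real.sqrt ((2 * l + 1) / 2 * ((l - m)! : ℝ) / ((l + m)! : ℝ)) *
    (1 / (2 ^ l * (l ! : ℝ))) with hc
  set p : ℝ[X] := derivative^[l + m] (uu l) with hp
  have hode : ∀ y : ℝ, (y ^ 2 - 1) * eval y (derivative (derivative p)) =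
      -(2 * (m : ℝ) + 2) * y * eval y (derivative p) +
        ((l : ℝ) * (l + 1) - m * (m + 1)) * eval y p := by
    intro y
    have h := congrArg (eval y) (uu_rec l (l + m))
    simp only [eval_mul, eval_add, eval_C, eval_X, eval_sub, eval_pow, eval_one] at h
    have e1 : derivative p = derivative^[l + m + 1] (uu l) := by
      rw [hp, ← Function.iterate_succ_apply' derivative (l + m)]
    have e2 : derivative (derivative p) = derivative^[l + m + 2] (uu l) := by
      rw [e1, ← Function.iterate_succ_apply' derivative (l + m + 1)]
    rw [e2, e1, hp]
    push_cast at h ⊢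
    linear_combination h
  have hkey := SL_key p m ((l : ℝ) * (l + 1)) hode x hx
  have hnalf : nalf m l = fun y : ℝ => c * ((1 - y ^ 2) ^ ((m : ℝ) / 2) * eval y p) := by
    rw [nalf_eq]
  have hfun : (fun y : ℝ => (1 - y ^ 2) * deriv (nalf m l) y) =
      fun y : ℝ => c * ((1 - y ^ 2) *
        deriv (fun z : ℝ => (1 - z ^ 2) ^ ((m : ℝ) / 2) * eval z p) y) := by
    funext y
    rw [hnalf]
    rw [deriv_const_mul_field]
    ring
  rw [hfun, hnalf, deriv_const_mul_field]
  linear_combination c * hkey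
end

section
/- For any nonnegative integers m and n with n > 0, the normalized associated Legendre function P̄^m_{m+2n+1} has exactly n zeros in the open interval (0,1). -/
open scoped Nat


open scoped Nat

open Polynomial Set

/-- Rolle for polynomials over a finset of roots. -/
lemma rolle_finset (f : ℝ[X]) : ∀ (N : ℕ) (s : Finset ℝ) (hcard : s.card = N)
    (hne : s.Nonempty) (hs : ∀ x ∈ s, f.IsRoot x),
    ∃ t : Finset ℝ, t.card + 1 = s.card ∧ ∀ y ∈ t, f.derivative.IsRoot y ∧
      s.min' hne < y ∧ y < s.max' hne := by
  intro N
  induction N with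
  | zero => intro s hcard hne _; exact absurd hcard (by simp [Finset.card_ne_zero_of_mem hne.choose_spec])
  | succ N ih =>
    intro s hcard hne hs
    rcases Nat.eq_zero_or_pos N with hN | hN
    · exact ⟨∅, by simp [hcard, hN], by simp⟩
    · -- s.card = N+1 ≥ 2
      set b := s.max' hne with hb
      have hbs : b ∈ s := s.max'_mem hne
      set s' := s.erase b with hs'
      have hcard' : s'.card = N := by rw [hs', Finset.card_erase_of_mem hbs, hcard]; omega
      have hne' : s'.Nonempty := Finset.card_pos.mp (by omega)
      set a := s'.max' hne' with ha
      have has' : a ∈ s' := s'.max'_mem hne'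
      have has : a ∈ s := Finset.mem_of_mem_erase has'
      have hab : a < b := lt_of_le_of_ne (s.le_max' a has) (Finset.ne_of_mem_erase has')
      -- Rolle between a and b
      have hfa : f.eval a = 0 := hs a has
      have hfb : f.eval b = 0 := hs b hbs
      obtain ⟨c, hc, hc0⟩ := exists_deriv_eq_zero hab (f.continuous.continuousOn)
        (by rw [hfa, hfb])
      rw [Polynomial.deriv] at hc0
      obtain ⟨t', ht'card, ht'⟩ := ih s' hcard' hne' (fun x hx => hs x (Finset.mem_of_mem_erase hx))
      refine ⟨insert c t', ?_, ?_⟩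
      · have hct' : c ∉ t' := fun h => absurd ((ht' c h).2.2) (not_lt.mpr hc.1.le)
        rw [Finset.card_insert_of_notMem hct', ht'card, hcard', hcard]
      · intro y hy
        rcases Finset.mem_insert.mp hy with rfl | hy'
        · exact ⟨hc0, lt_of_le_of_lt (s.min'_le a has) hc.1, hc.2⟩
        · obtain ⟨h1, h2, h3⟩ := ht' y hy'
          refine ⟨h1, lt_of_le_of_lt (s.min'_le _ (Finset.mem_of_mem_erase (s'.min'_mem hne'))) h2, ?_⟩
          exact h3.trans hab |>.trans_le (le_refl b) |>.trans_le (le_refl _)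

section
variable (l : ℕ)

noncomputable def pl : ℝ[X] := ((X:ℝ[X])^2 - 1)^l

lemma pl_eq : pl l = ((X:ℝ[X]) - C 1)^l * ((X:ℝ[X]) - C (-1))^l := by
  rw [pl, ← mul_pow]
  congr 1
  simp only [map_one, map_neg]
  ring

lemma pl_monic : (pl l).Monic := by
  have : ((X:ℝ[X])^2 - 1) = (X:ℝ[X])^2 - C 1 := by rw [map_one]
  rw [pl, this]; exact (monic_X_pow_sub_C (1:ℝ) (n := 2) (by norm_num)).pow l

lemma pl_natDegree : (pl l).natDegree = 2 * l := by
  rw [pl]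
  rw [natDegree_pow]
  have : ((X:ℝ[X])^2 - 1).natDegree = 2 := by
    have h1 : ((X:ℝ[X])^2 - 1) = (X:ℝ[X])^2 - C 1 := by rw [map_one]
    rw [h1, natDegree_X_pow_sub_C]
  rw [this]; ring

lemma iterd_natDegree {k : ℕ} (hk : k ≤ 2 * l) :
    (derivative^[k] (pl l)).natDegree = 2 * l - k ∧ derivative^[k] (pl l) ≠ 0 := by
  have hco : (derivative^[k] (pl l)).coeff (2 * l - k) ≠ 0 := by
    rw [coeff_iterate_derivative]
    have h2 : 2 * l - k + k = 2 * l := by omega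
    rw [h2]
    have : (pl l).coeff (2 * l) = 1 := by
      have := (pl_monic l).leadingCoeff
      rwa [leadingCoeff, pl_natDegree] at this
    rw [this, nsmul_eq_mul, mul_one]
    simp only [ne_eq, Nat.cast_eq_zero, Nat.descFactorial_eq_zero_iff_lt]
    omega
  have hne : derivative^[k] (pl l) ≠ 0 := fun h => hco (by simp [h])
  refine ⟨le_antisymm ?_ (le_natDegree_of_ne_zero hco), hne⟩
  calc (derivative^[k] (pl l)).natDegree ≤ (pl l).natDegree - k := natDegree_iterate_derivative _ _
  _ = 2 * l - k := by rw [pl_natDegree]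

lemma pl_rootMult_one : (pl l).rootMultiplicity 1 = l := by
  rw [pl_eq]
  rcases Nat.eq_zero_or_pos l with rfl | hl
  · simp
  rw [rootMultiplicity_mul (by rw [← pl_eq]; exact (pl_monic l).ne_zero)]
  rw [rootMultiplicity_X_sub_C_pow, rootMultiplicity_eq_zero (by
    intro h
    simp only [IsRoot, eval_pow, eval_sub, eval_X, eval_C, sub_neg_eq_add] at h
    exact pow_ne_zero l (by norm_num : (1:ℝ) + 1 ≠ 0) h), add_zero]

lemma pl_rootMult_negone : (pl l).rootMultiplicity (-1) = l := by
  rw [pl_eq]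
  rcases Nat.eq_zero_or_pos l with rfl | hl
  · simp
  rw [rootMultiplicity_mul (by rw [← pl_eq]; exact (pl_monic l).ne_zero)]
  rw [rootMultiplicity_X_sub_C_pow, rootMultiplicity_eq_zero (by
    intro h
    simp only [IsRoot, eval_pow, eval_sub, eval_X, eval_C] at h
    exact pow_ne_zero l (by norm_num : (-1:ℝ) - 1 ≠ 0) h), zero_add]

lemma iterd_rootMult {k : ℕ} (hk : k ≤ l) :
    (derivative^[k] (pl l)).rootMultiplicity 1 = l - k ∧
    (derivative^[k] (pl l)).rootMultiplicity (-1) = l - k := by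
  induction k with
  | zero => simpa using ⟨pl_rootMult_one l, pl_rootMult_negone l⟩
  | succ k ih =>
    obtain ⟨h1, h2⟩ := ih (by omega)
    have hne : derivative^[k] (pl l) ≠ 0 := (iterd_natDegree l (by omega)).2
    have hr1 : (derivative^[k] (pl l)).IsRoot 1 :=
      (rootMultiplicity_pos hne).mp (by omega)
    have hr2 : (derivative^[k] (pl l)).IsRoot (-1) :=
      (rootMultiplicity_pos hne).mp (by omega)
    rw [Function.iterate_succ_apply', derivative_rootMultiplicity_of_root hr1,
      derivative_rootMultiplicity_of_root hr2, h1, h2]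
    omega

/-- Phase 1: for k ≤ l, the k-th derivative has k distinct roots in (-1,1). -/
lemma phase1 {k : ℕ} (hk : k ≤ l) :
    ∃ s : Finset ℝ, s.card = k ∧ ∀ x ∈ s, (derivative^[k] (pl l)).IsRoot x ∧ x ∈ Ioo (-1:ℝ) 1 := by
  induction k with
  | zero => exact ⟨∅, by simp, by simp⟩
  | succ k ih =>
    obtain ⟨s, hsc, hs⟩ := ih (by omega)
    have hne : derivative^[k] (pl l) ≠ 0 := (iterd_natDegree l (by omega)).2
    have hr1 : (derivative^[k] (pl l)).IsRoot 1 :=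
      (rootMultiplicity_pos hne).mp (by rw [(iterd_rootMult l (by omega : k ≤ l)).1]; omega)
    have hr2 : (derivative^[k] (pl l)).IsRoot (-1) :=
      (rootMultiplicity_pos hne).mp (by rw [(iterd_rootMult l (by omega : k ≤ l)).2]; omega)
    set S : Finset ℝ := insert (-1) (insert 1 s) with hS
    have h1S : (1:ℝ) ∉ s := fun h => absurd (hs 1 h).2.2 (by norm_num)
    have hm1S : (-1:ℝ) ∉ insert 1 s := by
      simp only [Finset.mem_insert]
      push_neg
      exact ⟨by norm_num, fun h => absurd (hs (-1) h).2.1 (by norm_num)⟩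
    have hSc : S.card = k + 2 := by
      rw [hS, Finset.card_insert_of_notMem hm1S, Finset.card_insert_of_notMem h1S, hsc]
    have hSne : S.Nonempty := ⟨-1, Finset.mem_insert_self _ _⟩
    have hSroots : ∀ x ∈ S, (derivative^[k] (pl l)).IsRoot x := by
      intro x hx
      rcases Finset.mem_insert.mp hx with rfl | hx
      · exact hr2
      rcases Finset.mem_insert.mp hx with rfl | hx
      · exact hr1
      · exact (hs x hx).1
    have hSbound : ∀ x ∈ S, -1 ≤ x ∧ x ≤ 1 := by
      intro x hx
      rcases Finset.mem_insert.mp hx with rfl | hx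
      · norm_num
      rcases Finset.mem_insert.mp hx with rfl | hx
      · norm_num
      · exact ⟨(hs x hx).2.1.le, (hs x hx).2.2.le⟩
    obtain ⟨t, htc, ht⟩ := rolle_finset (derivative^[k] (pl l)) S.card S rfl hSne hSroots
    refine ⟨t, by omega, fun y hy => ?_⟩
    obtain ⟨hroot, hlo, hhi⟩ := ht y hy
    have hminS := hSbound _ (S.min'_mem hSne)
    have hmaxS := hSbound _ (S.max'_mem hSne)
    exact ⟨by rw [Function.iterate_succ_apply']; exact hroot,
      (hminS.1.trans_lt hlo), hhi.trans_le hmaxS.2⟩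

/-- Phase 2: for l ≤ k ≤ l + m (with k ≤ 2l), 2l - k distinct roots in (-1,1). -/
lemma phase2 {j : ℕ} (hj : j ≤ l) :
    ∃ s : Finset ℝ, s.card = l - j ∧
      ∀ x ∈ s, (derivative^[l + j] (pl l)).IsRoot x ∧ x ∈ Ioo (-1:ℝ) 1 := by
  induction j with
  | zero => simpa using phase1 l (le_refl l)
  | succ j ih =>
    obtain ⟨s, hsc, hs⟩ := ih (by omega)
    have hne : s.Nonempty := Finset.card_pos.mp (by omega)
    obtain ⟨t, htc, ht⟩ := rolle_finset (derivative^[l + j] (pl l)) s.card s rfl hne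
      (fun x hx => (hs x hx).1)
    refine ⟨t, by omega, fun y hy => ?_⟩
    obtain ⟨hroot, hlo, hhi⟩ := ht y hy
    have hmin := hs _ (s.min'_mem hne)
    have hmax := hs _ (s.max'_mem hne)
    refine ⟨by rw [show l + (j+1) = l + j + 1 by omega, Function.iterate_succ_apply']; exact hroot,
      hmin.2.1.trans hlo, hhi.trans hmax.2.2⟩

/-- Oddness/evenness: comp with -X. -/
lemma iterd_comp_neg (k : ℕ) :
    (derivative^[k] (pl l)).comp (-X) = (-1)^k * derivative^[k] (pl l) := by
  induction k with
  | zero =>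
    simp only [Function.iterate_zero_apply, pow_zero, one_mul, pl]
    rw [pow_comp, sub_comp, pow_comp, X_comp, one_comp]
    congr 2
    ring
  | succ k ih =>
    rw [Function.iterate_succ_apply']
    have := congrArg derivative ih
    rw [derivative_comp, derivative_neg, derivative_X, derivative_mul] at this
    simp only [derivative_pow, derivative_neg, derivative_one, neg_zero, mul_zero,
      zero_mul, zero_add] at this
    linear_combination (-1 : ℝ[X]) * this
end

lemma evalIter (P : ℝ[X]) (k : ℕ) :
    iteratedDeriv k (fun x : ℝ => P.eval x) = fun x => (derivative^[k] P).eval x := by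
  induction k with
  | zero => simp only [iteratedDeriv_zero, Function.iterate_zero_apply]
  | succ k ih =>
    rw [iteratedDeriv_succ, ih, Function.iterate_succ_apply']
    funext x
    exact Polynomial.deriv (𝕜 := ℝ) _

lemma legendreP_eq (l : ℕ) :
    legendreP l = fun x => (C (1 / (2 ^ l * (l ! : ℝ))) * derivative^[l] (pl l)).eval x := by
  funext x
  unfold legendreP
  have h : (fun y : ℝ => (y ^ 2 - 1) ^ l) = fun y => (pl l).eval y := by
    funext y; simp [pl]
  rw [h, evalIter]
  simp

lemma iterd_legendreP (m l : ℕ) (x : ℝ) :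
    iteratedDeriv m (legendreP l) x =
      (1 / (2 ^ l * (l ! : ℝ))) * (derivative^[l + m] (pl l)).eval x := by
  rw [legendreP_eq, evalIter, iterate_derivative_C_mul]
  have : derivative^[m] (derivative^[l] (pl l)) = derivative^[l + m] (pl l) := by
    rw [add_comm, Function.iterate_add_apply]
  rw [this]
  simp

lemma nalf_zero_iff (m l : ℕ) (x : ℝ) (hx : x ∈ Ioo (0:ℝ) 1) :
    nalf m l x = 0 ↔ (derivative^[l + m] (pl l)).eval x = 0 := by
  unfold nalf
  rw [iterd_legendreP]
  have hA : Real.sqrt ((2 * l + 1) / 2 * ((l - m)! : ℝ) / ((l + m)! : ℝ)) ≠ 0 := by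
    refine ne_of_gt (Real.sqrt_pos.mpr ?_)
    have h1 : (0:ℝ) < ((l - m)! : ℝ) := Nat.cast_pos.mpr (Nat.factorial_pos _)
    have h2 : (0:ℝ) < ((l + m)! : ℝ) := Nat.cast_pos.mpr (Nat.factorial_pos _)
    positivity
  have hB : (1 - x ^ 2) ^ ((m : ℝ) / 2) ≠ 0 := by
    refine ne_of_gt (Real.rpow_pos_of_pos ?_ _)
    nlinarith [hx.1, hx.2]
  have hc : (1 / (2 ^ l * (l ! : ℝ))) ≠ 0 := by
    have : (0:ℝ) < (l ! : ℝ) := Nat.cast_pos.mpr (Nat.factorial_pos _)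
    positivity
  constructor
  · intro h
    rcases mul_eq_zero.mp h with h' | h'
    · rcases mul_eq_zero.mp h' with h'' | h''
      · exact absurd h'' hA
      · exact absurd h'' hB
    · rcases mul_eq_zero.mp h' with h'' | h''
      · exact absurd h'' hc
      · exact h''
  · intro h; rw [h, mul_zero, mul_zero]

theorem zeros_of_nalf_odd (m n : ℕ) (hn : 0 < n) :
    ∃ y : Fin n → ℝ, StrictMono y ∧
      (∀ j, y j ∈ Set.Ioo (0 : ℝ) 1 ∧ nalf m (m + 2 * n + 1) (y j) = 0) ∧
      (∀ z ∈ Set.Ioo (0 : ℝ) 1, nalf m (m + 2 * n + 1) z = 0 → ∃ j, z = y j) := by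
  set l := m + 2 * n + 1 with hl
  set q : ℝ[X] := derivative^[l + m] (pl l) with hq
  have hlm : l + m ≤ 2 * l := by omega
  obtain ⟨hqdeg, hqne⟩ := iterd_natDegree l hlm
  have hqdeg' : q.natDegree = 2 * n + 1 := by rw [hq, hqdeg]; omega
  -- the finset of roots
  obtain ⟨s, hsc, hs⟩ := phase2 l (show m ≤ l by omega)
  have hsc' : s.card = 2 * n + 1 := by rw [hsc]; omega
  -- every root of q lies in s
  have hsub : s ⊆ q.roots.toFinset := by
    intro x hx
    rw [Multiset.mem_toFinset, mem_roots hqne]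
    exact (hs x hx).1
  have hcardle : q.roots.toFinset.card ≤ s.card := by
    calc q.roots.toFinset.card ≤ Multiset.card q.roots := q.roots.toFinset_card_le
    _ ≤ q.natDegree := q.card_roots'
    _ = s.card := by rw [hqdeg', hsc']
  have hseq : s = q.roots.toFinset := Finset.eq_of_subset_of_card_le hsub hcardle
  have every_root : ∀ z : ℝ, q.IsRoot z → z ∈ s := by
    intro z hz
    rw [hseq]
    exact Multiset.mem_toFinset.mpr ((mem_roots hqne).mpr hz)
  -- oddness
  have hodd : ∀ x : ℝ, q.eval (-x) = - q.eval x := by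
    intro x
    have h := congrArg (fun r : ℝ[X] => r.eval x) (iterd_comp_neg l (l + m))
    simp only [eval_comp, eval_neg, eval_X, eval_mul, eval_pow, eval_neg, eval_one] at h
    rw [hq, h]
    have : Odd (l + m) := ⟨m + n, by omega⟩
    rw [this.neg_one_pow]
    ring
  have h0root : q.IsRoot 0 := by
    have := hodd 0
    rw [neg_zero] at this
    have : q.eval 0 = 0 := by linarith
    exact this
  have h0s : (0:ℝ) ∈ s := every_root 0 h0root
  -- symmetry of s
  have hsymm : ∀ x ∈ s, -x ∈ s := by
    intro x hx
    refine every_root (-x) ?_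
    rw [IsRoot, hodd x, (hs x hx).1]
    ring
  set Pos := s.filter (fun x => 0 < x) with hPos
  set Neg := s.filter (fun x => x < 0) with hNeg
  have herase : s.erase 0 = Neg ∪ Pos := by
    ext z
    simp only [Finset.mem_erase, Finset.mem_union, hNeg, hPos, Finset.mem_filter]
    constructor
    · rintro ⟨hz0, hzs⟩
      rcases lt_or_gt_of_ne hz0 with h | h
      · exact Or.inl ⟨hzs, h⟩
      · exact Or.inr ⟨hzs, h⟩
    · rintro (⟨hzs, h⟩ | ⟨hzs, h⟩) <;> exact ⟨by intro he; rw [he] at h; exact lt_irrefl 0 h, hzs⟩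
  have hdisj : Disjoint Neg Pos := by
    rw [Finset.disjoint_left]
    intro a ha hb
    rw [hNeg, Finset.mem_filter] at ha
    rw [hPos, Finset.mem_filter] at hb
    linarith [ha.2, hb.2]
  have hNegimg : Neg = Pos.image (fun x => -x) := by
    ext z
    simp only [hNeg, hPos, Finset.mem_filter, Finset.mem_image]
    constructor
    · rintro ⟨hzs, hz⟩
      exact ⟨-z, ⟨hsymm z hzs, by linarith⟩, by ring⟩
    · rintro ⟨x, ⟨hxs, hx⟩, rfl⟩
      exact ⟨hsymm x hxs, by linarith⟩
  have hNegcard : Neg.card = Pos.card := by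
    rw [hNegimg]
    exact Finset.card_image_of_injective _ neg_injective
  have hPn : Pos.card = n := by
    have h1 : (s.erase 0).card = 2 * n := by
      rw [Finset.card_erase_of_mem h0s, hsc']
      omega
    rw [herase, Finset.card_union_of_disjoint hdisj, hNegcard] at h1
    omega
  -- enumeration
  set e := Pos.orderIsoOfFin hPn with he
  refine ⟨fun j => (e j : ℝ), ?_, ?_, ?_⟩
  · intro i j hij
    exact Subtype.coe_lt_coe.mpr (e.strictMono hij)
  · intro j
    have hj : ((e j : ℝ)) ∈ s ∧ 0 < (e j : ℝ) := Finset.mem_filter.mp (e j).2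
    have hIoo : (e j : ℝ) ∈ Ioo (0:ℝ) 1 := ⟨hj.2, (hs _ hj.1).2.2⟩
    exact ⟨hIoo, (nalf_zero_iff m l _ hIoo).mpr ((hs _ hj.1).1)⟩
  · intro z hz hnalf
    have hroot : q.eval z = 0 := (nalf_zero_iff m l z hz).mp hnalf
    have hzs : z ∈ s := every_root z hroot
    have hzPos : z ∈ Pos := Finset.mem_filter.mpr ⟨hzs, hz.1⟩
    obtain ⟨j, hj⟩ := e.surjective ⟨z, hzPos⟩
    exact ⟨j, (congrArg Subtype.val hj).symm⟩
end

section
/- Let m and n be nonnegative integers with n > 0, let y_0 < y_1 < ... < y_{n-1} be the positive zeros of P̄^m_{m+2n+1} in (0,1), and define σ_j = 2(2m+4n+3) / ((1-y_j²)((d/dx)P̄^m_{m+2n+1}(y_j))²) for j < n and σ_n = (2m+4n+3) / ((d/dx)P̄^m_{m+2n+1}(0))². Then for every even polynomial p of degree at most 4n, ∫_{-1}^{1} (1-x²)^m p(x) dx = σ_n p(0) + Σ_{j=0}^{n-1} σ_j (1-y_j²)^m p(y_j). -/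
open scoped Nat

section
open Polynomial

namespace GJaux

/-- iterated derivative of a polynomial eval. -/
lemma iteratedDeriv_polyeval (p : ℝ[X]) (k : ℕ) :
    iteratedDeriv k (fun x : ℝ => p.eval x) = fun x => (derivative^[k] p).eval x := by
  induction k with
  | zero => simp
  | succ k ih =>
    rw [iteratedDeriv_succ, ih, Function.iterate_succ_apply']
    funext x
    exact Polynomial.deriv _

lemma pInt (p : ℝ[X]) (a b : ℝ) :
    IntervalIntegrable (fun x => p.eval x) MeasureTheory.volume a b :=
  p.continuous.intervalIntegrable a b

/-- FTC for polynomials -/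
lemma pftc (p : ℝ[X]) (a b : ℝ) :
    ∫ x in a..b, (derivative p).eval x = p.eval b - p.eval a := by
  exact intervalIntegral.integral_eq_sub_of_hasDerivAt
    (fun x _ => p.hasDerivAt x) (pInt _ a b)

/-- single integration by parts on [-1,1] for polynomials -/
lemma ibp (p q : ℝ[X]) :
    ∫ x in (-1:ℝ)..1, (derivative p).eval x * q.eval x
      = p.eval 1 * q.eval 1 - p.eval (-1) * q.eval (-1)
        - ∫ x in (-1:ℝ)..1, p.eval x * (derivative q).eval x := by
  have h := intervalIntegral.integral_deriv_mul_eq_sub (a := (-1:ℝ)) (b := 1)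
    (u := fun x => p.eval x) (v := fun x => q.eval x)
    (u' := fun x => (derivative p).eval x) (v' := fun x => (derivative q).eval x)
    (fun x _ => p.hasDerivAt x) (fun x _ => q.hasDerivAt x)
    (pInt _ _ _) (pInt _ _ _)
  rw [intervalIntegral.integral_add ((pInt (derivative p) _ _).mul_continuousOn
      q.continuous.continuousOn) ((pInt p _ _).mul_continuousOn
      (derivative q).continuous.continuousOn)] at h
  linarith

/-- iterated integration by parts with vanishing boundary terms -/
lemma ibp_iter : ∀ (K : ℕ) (u v : ℝ[X]),
    (∀ i < K, (derivative^[K-1-i] u).eval 1 * (derivative^[i] v).eval 1 = 0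
            ∧ (derivative^[K-1-i] u).eval (-1) * (derivative^[i] v).eval (-1) = 0) →
    ∫ x in (-1:ℝ)..1, (derivative^[K] u).eval x * v.eval x
      = (-1:ℝ)^K * ∫ x in (-1:ℝ)..1, u.eval x * (derivative^[K] v).eval x := by
  intro K
  induction K with
  | zero => intro u v _; simp
  | succ K ih =>
    intro u v hb
    have h0 := hb 0 (Nat.succ_pos K)
    simp only [Nat.sub_zero, Nat.succ_sub_one, Function.iterate_zero_apply] at h0
    rw [Function.iterate_succ_apply', ibp (derivative^[K] u) v, h0.1, h0.2]
    have ih' := ih u (derivative v) ?_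
    · have e1 : derivative^[K+1] v = derivative^[K] (derivative v) :=
        Function.iterate_succ_apply _ _ _
      rw [e1, ih']
      ring
    · intro i hi
      have h2 := hb (i+1) (by omega)
      have hidx : K + 1 - 1 - (i + 1) = K - 1 - i := by omega
      rw [hidx] at h2
      have e2 : derivative^[i+1] v = derivative^[i] (derivative v) :=
        Function.iterate_succ_apply _ _ _
      rw [e2] at h2
      exact h2

/-- divisibility through iterated derivatives -/
lemma dvd_step {c : ℕ} {v : ℝ[X]} (h : ((X:ℝ[X])^2 - 1)^(c+1) ∣ v) :
    ((X:ℝ[X])^2 - 1)^c ∣ derivative v := by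
  obtain ⟨w, rfl⟩ := h
  rw [derivative_mul, derivative_pow]
  simp only [Nat.add_sub_cancel]
  exact dvd_add (((dvd_mul_left _ _).mul_right _).mul_right _)
    ((pow_dvd_pow _ (Nat.le_succ c)).mul_right _)

lemma dvd_iter (j : ℕ) : ∀ (c : ℕ) (v : ℝ[X]), ((X:ℝ[X])^2 - 1)^c ∣ v →
    ((X:ℝ[X])^2 - 1)^(c-j) ∣ derivative^[j] v := by
  induction j with
  | zero => intro c v h; simpa using h
  | succ j ih =>
    intro c v h
    rw [Function.iterate_succ_apply]
    rcases Nat.eq_zero_or_pos c with rfl | hc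
    · simpa using dvd_trans (one_dvd _) (dvd_refl _)
    · have : ((X:ℝ[X])^2 - 1)^(c-1) ∣ derivative v := by
        have := dvd_step (c := c - 1) (v := v) (by rwa [Nat.sub_add_cancel hc])
        exact this
      have h2 := ih (c-1) (derivative v) this
      have : c - 1 - j = c - (j+1) := by omega
      rwa [this] at h2

lemma eval_iter_deriv_zero {c j : ℕ} {v : ℝ[X]} (h : ((X:ℝ[X])^2 - 1)^c ∣ v)
    (hj : j < c) {x : ℝ} (hx : x^2 = 1) : (derivative^[j] v).eval x = 0 := by
  obtain ⟨w, hw⟩ := dvd_iter j c v h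
  rw [hw]
  have h1 : c - j = (c - j - 1) + 1 := by omega
  rw [h1]
  simp [hx]

/-- a polynomial of small degree after many derivatives: linear form -/
lemma iter_deriv_of_deg_le (v : ℝ[X]) (k : ℕ) (h : v.natDegree ≤ k+1) :
    derivative^[k] v = C (((k+1)! : ℝ) * v.coeff (k+1)) * X + C ((k ! : ℝ) * v.coeff k) := by
  have hd : (derivative^[k] v).natDegree ≤ 1 := by
    refine le_trans (natDegree_iterate_derivative _ _) (by omega)
  have he := (derivative^[k] v).eq_X_add_C_of_natDegree_le_one hd
  have hdesc : (1 + k).descFactorial k = (k+1)! := by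
    rw [Nat.add_comm, Nat.descFactorial_eq_div (Nat.le_succ k)]
    have h2 : k + 1 - k = 1 := by omega
    rw [h2]
    simp
  have hc1 : (derivative^[k] v).coeff 1 = ((k+1)! : ℝ) * v.coeff (1+k) := by
    rw [coeff_iterate_derivative, hdesc, nsmul_eq_mul]
  have hc0 : (derivative^[k] v).coeff 0 = (k ! : ℝ) * v.coeff (0+k) := by
    rw [coeff_iterate_derivative, Nat.zero_add, Nat.descFactorial_self, nsmul_eq_mul]
  rw [hc1, hc0] at he
  rw [he]
  rw [Nat.add_comm 1 k, Nat.zero_add]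


/-- the Rodrigues core polynomial -/
noncomputable def Gp (l : ℕ) : ℝ[X] := ((X:ℝ[X])^2 - 1)^l

noncomputable def cc (l : ℕ) : ℝ := 1 / (2^l * (l ! : ℝ))

/-- `W l m` : the m-th derivative of the Legendre polynomial of degree l,
as a polynomial. -/
noncomputable def W (l m : ℕ) : ℝ[X] := derivative^[m] (C (cc l) * derivative^[l] (Gp l))

lemma cc_pos (l : ℕ) : 0 < cc l := by
  have h : (0:ℝ) < (l ! : ℝ) := by exact_mod_cast Nat.factorial_pos l
  unfold cc
  positivity

lemma iterate_derivative_C_mul' (a : ℝ) (p : ℝ[X]) (k : ℕ) :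
    derivative^[k] (C a * p) = C a * derivative^[k] p := by
  induction k with
  | zero => simp
  | succ k ih => rw [Function.iterate_succ_apply', Function.iterate_succ_apply', ih,
      derivative_C_mul]

lemma W_eq (l m : ℕ) : W l m = C (cc l) * derivative^[l + m] (Gp l) := by
  rw [W, iterate_derivative_C_mul', ← Function.iterate_add_apply, Nat.add_comm m l]

lemma monic_Gp (l : ℕ) : (Gp l).Monic := by
  apply Polynomial.Monic.pow
  have : ((X:ℝ[X])^2 - 1) = X^2 - C 1 := by simp
  rw [this]
  exact monic_X_pow_sub_C 1 (by norm_num)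

lemma natDegree_Gp (l : ℕ) : (Gp l).natDegree = 2 * l := by
  rw [Gp, natDegree_pow]
  have : ((X:ℝ[X])^2 - 1) = X^2 - C 1 := by simp
  rw [this, natDegree_X_pow_sub_C]
  ring

lemma coeff_Gp_top (l : ℕ) : (Gp l).coeff (2*l) = 1 := by
  have := (monic_Gp l).leadingCoeff
  rwa [leadingCoeff, natDegree_Gp] at this

lemma coeff_iterG_top (l k : ℕ) (hk : k ≤ 2*l) :
    (derivative^[k] (Gp l)).coeff (2*l - k) = ((2*l).descFactorial k : ℝ) := by
  rw [coeff_iterate_derivative, nsmul_eq_mul]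
  have h1 : 2*l - k + k = 2*l := by omega
  rw [h1, coeff_Gp_top, mul_one]

lemma natDegree_iterG (l k : ℕ) (hk : k ≤ 2*l) :
    (derivative^[k] (Gp l)).natDegree = 2*l - k := by
  refine le_antisymm (le_trans (natDegree_iterate_derivative _ _) (by rw [natDegree_Gp])) ?_
  apply le_natDegree_of_ne_zero
  rw [coeff_iterG_top l k hk]
  have : (2*l).descFactorial k ≠ 0 := by
    rw [Ne, Nat.descFactorial_eq_zero_iff_lt]
    omega
  exact_mod_cast this

lemma natDegree_W (l m : ℕ) (hm : m ≤ l) : (W l m).natDegree = l - m := by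
  rw [W_eq]
  rw [natDegree_C_mul (by exact (cc_pos l).ne')]
  rw [natDegree_iterG l (l+m) (by omega)]
  omega

lemma coeff_W_top (l m : ℕ) (hm : m ≤ l) :
    (W l m).coeff (l - m) = cc l * ((2*l).descFactorial (l+m) : ℝ) := by
  rw [W_eq, coeff_C_mul]
  have h2 : 2*l - (l+m) = l - m := by omega
  rw [← h2, coeff_iterG_top l (l+m) (by omega)]

lemma natDegree_W_le (l m : ℕ) : (W l m).natDegree ≤ l - m := by
  rw [W_eq]
  refine le_trans (natDegree_C_mul_le _ _) ?_
  refine le_trans (natDegree_iterate_derivative _ _) ?_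
  rw [natDegree_Gp]
  omega

/-- coefficients of (1-X^2)^m at odd indices vanish -/
lemma coeff_A_odd (mm : ℕ) : ∀ j : ℕ, Odd j → (((1:ℝ[X]) - X^2)^mm).coeff j = 0 := by
  induction mm with
  | zero =>
    intro j hj
    have hj0 : j ≠ 0 := by rcases hj with ⟨t, rfl⟩; omega
    simp [coeff_one, hj0]
  | succ mm ih =>
    intro j hj
    have : ((1:ℝ[X]) - X^2)^(mm+1) = ((1:ℝ[X]) - X^2)^mm - ((1 - X^2)^mm) * X^2 := by
      ring
    rw [this, coeff_sub, coeff_mul_X_pow', ih j hj]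
    rcases le_or_gt 2 j with h2 | h2
    · rw [if_pos h2, ih (j-2) (by rcases hj with ⟨t, rfl⟩; exact ⟨t-1, by omega⟩)]
      simp
    · rw [if_neg (by omega)]
      simp

lemma A_eq (mm : ℕ) : ((1:ℝ[X]) - X^2)^mm = C ((-1:ℝ)^mm) * Gp mm := by
  rw [Gp]
  have h : ((1:ℝ[X]) - X^2) = -(X^2 - 1) := by ring
  rw [h, neg_pow, map_pow, map_neg, map_one]

lemma natDegree_A (mm : ℕ) : (((1:ℝ[X]) - X^2)^mm).natDegree = 2*mm := by
  rw [A_eq, natDegree_C_mul (pow_ne_zero _ (by norm_num : (-1:ℝ) ≠ 0)), natDegree_Gp]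

lemma coeff_A_top (mm : ℕ) : (((1:ℝ[X]) - X^2)^mm).coeff (2*mm) = (-1:ℝ)^mm := by
  rw [A_eq, coeff_C_mul, coeff_Gp_top, mul_one]

/-- top coefficient of a product -/
lemma coeff_mul_top (A s : ℝ[X]) (dA k : ℕ) (hA : A.natDegree ≤ dA) (hs : s.natDegree ≤ k) :
    (A * s).coeff (dA + k) = A.coeff dA * s.coeff k := by
  rw [coeff_mul]
  apply Finset.sum_eq_single (dA, k)
  · rintro ⟨i, j⟩ hij hne
    rw [Finset.HasAntidiagonal.mem_antidiagonal] at hij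
    simp only
    rcases le_or_gt i dA with hi | hi
    · have hj : k < j := by
        rcases lt_or_eq_of_le hi with hi' | rfl
        · omega
        · exact absurd (by omega : j = k) (by simpa using hne)
      rw [coeff_eq_zero_of_natDegree_lt (lt_of_le_of_lt hs hj), mul_zero]
    · rw [coeff_eq_zero_of_natDegree_lt (lt_of_le_of_lt hA hi), zero_mul]
  · intro h
    simp at h

noncomputable def Jv (l : ℕ) : ℝ := ∫ x in (-1:ℝ)..1, ((1:ℝ) - x^2)^l

lemma int_eval_Gp (l : ℕ) : ∫ x in (-1:ℝ)..1, (Gp l).eval x = (-1:ℝ)^l * Jv l := by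
  have h : (fun x : ℝ => (Gp l).eval x) = fun x : ℝ => (-1:ℝ)^l * ((1:ℝ)-x^2)^l := by
    funext x
    simp only [Gp, eval_pow, eval_sub, eval_one, eval_X]
    rw [show x^2 - 1 = -(1-x^2) by ring, neg_pow]
  rw [h, intervalIntegral.integral_const_mul, Jv]

lemma eval_Gp_eq_zero (l : ℕ) (hl : 0 < l) {x : ℝ} (hx : x^2 = 1) : (Gp l).eval x = 0 := by
  simp [Gp, hx, zero_pow hl.ne']

lemma int_x_Gp (l : ℕ) : ∫ x in (-1:ℝ)..1, x * (Gp l).eval x = 0 := by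
  set q : ℝ[X] := C ((2*(l:ℝ)+2)⁻¹) * Gp (l+1) with hq
  have key : ∀ x:ℝ, (derivative q).eval x = x * (Gp l).eval x := by
    intro x
    have h2 : (2*(l:ℝ)+2) ≠ 0 := by positivity
    simp only [hq, derivative_C_mul, Gp, derivative_pow, derivative_sub, derivative_one,
      derivative_X_pow, derivative_X, eval_mul, eval_C, eval_natCast, eval_pow, eval_sub,
      eval_X, eval_one, eval_add, sub_zero]
    push_cast
    field_simp
  have hcong : (fun x:ℝ => x * (Gp l).eval x) = fun x => (derivative q).eval x := by
    funext x; rw [key]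
  rw [hcong, pftc]
  have e1 : (Gp (l+1)).eval 1 = 0 := eval_Gp_eq_zero _ (by omega) (by norm_num)
  have e2 : (Gp (l+1)).eval (-1) = 0 := eval_Gp_eq_zero _ (by omega) (by norm_num)
  simp [hq, e1, e2]

lemma Jv_succ (l : ℕ) : Jv (l+1) = (2*(l:ℝ)+2)/(2*(l:ℝ)+3) * Jv l := by
  set q : ℝ[X] := X * ((1 - X^2)^(l+1)) with hq
  have hder : ∀ x : ℝ, (derivative q).eval x
      = (2*(l:ℝ)+3) * ((1:ℝ)-x^2)^(l+1) - (2*(l:ℝ)+2) * ((1:ℝ)-x^2)^l := by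
    intro x
    simp only [hq, derivative_mul, derivative_X, derivative_pow, derivative_sub,
      derivative_one, derivative_X_pow, one_mul, eval_add, eval_mul, eval_pow, eval_sub,
      eval_one, eval_X, eval_natCast, eval_C, zero_sub, eval_neg]
    push_cast
    ring
  have hint : ∫ x in (-1:ℝ)..1, (derivative q).eval x = q.eval 1 - q.eval (-1) := pftc _ _ _
  have hz : q.eval 1 - q.eval (-1) = 0 := by
    simp [hq]
  have hsplit : ∫ x in (-1:ℝ)..1, (derivative q).eval x
      = (2*(l:ℝ)+3) * Jv (l+1) - (2*(l:ℝ)+2) * Jv l := by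
    have hcong : (fun x:ℝ => (derivative q).eval x)
        = fun x:ℝ => (2*(l:ℝ)+3) * ((1:ℝ)-x^2)^(l+1) - (2*(l:ℝ)+2) * ((1:ℝ)-x^2)^l := by
      funext x; rw [hder]
    rw [hcong, intervalIntegral.integral_sub, intervalIntegral.integral_const_mul,
      intervalIntegral.integral_const_mul, Jv, Jv]
    · exact Continuous.intervalIntegrable
        (continuous_const.mul ((continuous_const.sub (continuous_pow 2)).pow (l+1))) _ _
    · exact Continuous.intervalIntegrable
        (continuous_const.mul ((continuous_const.sub (continuous_pow 2)).pow l)) _ _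
  have h3 : (2*(l:ℝ)+3) ≠ 0 := by positivity
  rw [hint, hz] at hsplit
  field_simp
  linarith [hsplit]

lemma Jv_formula (l : ℕ) : Jv l = 2^(2*l+1) * ((l ! : ℝ))^2 / ((2*l+1)! : ℝ) := by
  induction l with
  | zero =>
    norm_num [Jv]
  | succ l ih =>
    rw [Jv_succ, ih]
    have h1 : ((2*(l+1)+1)! : ℝ) = (2*l+3) * ((2*l+2) * ((2*l+1)! : ℝ)) := by
      have : 2*(l+1)+1 = (2*l+2)+1 := by ring
      rw [this, Nat.factorial_succ]
      have : 2*l+2 = (2*l+1)+1 := by ring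
      rw [this, Nat.factorial_succ]
      push_cast
      ring
    have h2 : (((l+1)!) : ℝ) = (l+1) * (l ! : ℝ) := by
      rw [Nat.factorial_succ]; push_cast; ring
    rw [h1, h2]
    have hf1 : ((2*l+1)! : ℝ) ≠ 0 := by exact_mod_cast (Nat.factorial_pos _).ne'
    have hf2 : (2*(l:ℝ)+3) ≠ 0 := by positivity
    have hf3 : (2*(l:ℝ)+2) ≠ 0 := by positivity
    field_simp
    push_cast
    ring

/-- the master constant -/
noncomputable def Phi (lam mm : ℕ) : ℝ := cc lam * ((lam+mm)! : ℝ) * Jv lam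

lemma natDegree_le_pred {p : ℝ[X]} {d : ℕ} (h1 : p.natDegree ≤ d + 1)
    (h2 : p.coeff (d+1) = 0) : p.natDegree ≤ d := by
  by_contra h
  push_neg at h
  have he : p.natDegree = d + 1 := by omega
  have : p.leadingCoeff = 0 := by rw [leadingCoeff, he]; exact h2
  rw [leadingCoeff_eq_zero] at this
  rw [this] at he
  simp at he

lemma wInt (mm : ℕ) (p q : ℝ[X]) (a b : ℝ) :
    IntervalIntegrable (fun x : ℝ => (1 - x^2)^mm * (p.eval x * q.eval x))
      MeasureTheory.volume a b := by
  apply Continuous.intervalIntegrable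
  exact ((continuous_const.sub (continuous_pow 2)).pow mm).mul (p.continuous.mul q.continuous)

lemma master0 (lam mm : ℕ) (hm : mm ≤ lam) (s : ℝ[X]) (hs : s.natDegree ≤ lam - mm) :
    ∫ x in (-1:ℝ)..1, (1 - x^2)^mm * ((W lam mm).eval x * s.eval x)
      = Phi lam mm * s.coeff (lam - mm) := by
  set K := lam + mm with hK
  set v : ℝ[X] := ((1:ℝ[X]) - X^2)^mm * s with hv
  have hdegv : v.natDegree ≤ K := by
    refine le_trans (natDegree_mul_le) ?_
    rw [natDegree_A]
    omega
  have hcong : (fun x : ℝ => (1 - x^2)^mm * ((W lam mm).eval x * s.eval x))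
      = fun x : ℝ => cc lam * ((derivative^[K] (Gp lam)).eval x * v.eval x) := by
    funext x
    rw [W_eq]
    simp only [hv, eval_mul, eval_pow, eval_sub, eval_one, eval_X, eval_C]
    ring
  rw [hcong, intervalIntegral.integral_const_mul]
  have hbd : ∀ i < K, (derivative^[K-1-i] (Gp lam)).eval 1 * (derivative^[i] v).eval 1 = 0
      ∧ (derivative^[K-1-i] (Gp lam)).eval (-1) * (derivative^[i] v).eval (-1) = 0 := by
    intro i hi
    rcases lt_or_ge i mm with him | him
    · have hdvd : ((X:ℝ[X])^2 - 1)^mm ∣ v := by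
        rw [hv, A_eq]
        exact Dvd.dvd.mul_right (Dvd.dvd.mul_left (dvd_refl _) _) _
      constructor
      · rw [eval_iter_deriv_zero hdvd him (by norm_num : (1:ℝ)^2 = 1), mul_zero]
      · rw [eval_iter_deriv_zero hdvd him (by norm_num : ((-1):ℝ)^2 = 1), mul_zero]
    · have hj : K - 1 - i < lam := by omega
      have hdvd : ((X:ℝ[X])^2 - 1)^lam ∣ Gp lam := dvd_refl _
      constructor
      · rw [eval_iter_deriv_zero hdvd hj (by norm_num : (1:ℝ)^2 = 1), zero_mul]
      · rw [eval_iter_deriv_zero hdvd hj (by norm_num : ((-1):ℝ)^2 = 1), zero_mul]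
  rw [ibp_iter K (Gp lam) v hbd]
  have hiter : derivative^[K] v = C ((K ! : ℝ) * v.coeff K) := by
    rw [iter_deriv_of_deg_le v K (le_trans hdegv (Nat.le_succ K))]
    rw [coeff_eq_zero_of_natDegree_lt (lt_of_le_of_lt hdegv (Nat.lt_succ_self K))]
    simp
  have hvK : v.coeff K = (-1:ℝ)^mm * s.coeff (lam - mm) := by
    have hK2 : K = 2*mm + (lam - mm) := by omega
    rw [hv, hK2, coeff_mul_top _ _ _ _ (le_of_eq (natDegree_A mm)) hs, coeff_A_top]
  have hc2 : (fun x : ℝ => (Gp lam).eval x * (derivative^[K] v).eval x)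
      = fun x : ℝ => ((K ! : ℝ) * v.coeff K) * (Gp lam).eval x := by
    funext x
    rw [hiter]
    simp [mul_comm]
  rw [hc2, intervalIntegral.integral_const_mul, int_eval_Gp, hvK]
  rw [Phi]
  have hsign : (-1:ℝ)^K * ((-1:ℝ)^mm * (-1:ℝ)^lam) = 1 := by
    rw [← pow_add, ← pow_add]
    have : K + (mm + lam) = 2*(lam+mm) := by omega
    rw [this, pow_mul]
    norm_num
  have : cc lam * ((-1:ℝ)^K * ((K !:ℝ) * ((-1:ℝ)^mm * s.coeff (lam-mm)) * ((-1:ℝ)^lam * Jv lam)))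
      = (cc lam * ((K)! : ℝ) * Jv lam) * s.coeff (lam - mm)
        * ((-1:ℝ)^K * ((-1:ℝ)^mm * (-1:ℝ)^lam)) := by ring
  rw [this, hsign, mul_one, hK]

lemma masterX (lam mm : ℕ) (hm : mm ≤ lam) :
    ∫ x in (-1:ℝ)..1, (1 - x^2)^mm * ((W lam mm).eval x * ((X:ℝ[X])^(lam-mm+1)).eval x)
      = 0 := by
  set K := lam + mm with hK
  set s : ℝ[X] := (X:ℝ[X])^(lam-mm+1) with hsdef
  set v : ℝ[X] := ((1:ℝ[X]) - X^2)^mm * s with hv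
  have hdegv : v.natDegree ≤ K + 1 := by
    refine le_trans (natDegree_mul_le) ?_
    rw [natDegree_A, hsdef, natDegree_X_pow]
    omega
  have hcong : (fun x : ℝ => (1 - x^2)^mm * ((W lam mm).eval x * s.eval x))
      = fun x : ℝ => cc lam * ((derivative^[K] (Gp lam)).eval x * v.eval x) := by
    funext x
    rw [W_eq]
    simp only [hv, eval_mul, eval_pow, eval_sub, eval_one, eval_X, eval_C]
    ring
  rw [hcong, intervalIntegral.integral_const_mul]
  have hbd : ∀ i < K, (derivative^[K-1-i] (Gp lam)).eval 1 * (derivative^[i] v).eval 1 = 0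
      ∧ (derivative^[K-1-i] (Gp lam)).eval (-1) * (derivative^[i] v).eval (-1) = 0 := by
    intro i hi
    rcases lt_or_ge i mm with him | him
    · have hdvd : ((X:ℝ[X])^2 - 1)^mm ∣ v := by
        rw [hv, A_eq]
        exact Dvd.dvd.mul_right (Dvd.dvd.mul_left (dvd_refl _) _) _
      constructor
      · rw [eval_iter_deriv_zero hdvd him (by norm_num : (1:ℝ)^2 = 1), mul_zero]
      · rw [eval_iter_deriv_zero hdvd him (by norm_num : ((-1):ℝ)^2 = 1), mul_zero]
    · have hj : K - 1 - i < lam := by omega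
      have hdvd : ((X:ℝ[X])^2 - 1)^lam ∣ Gp lam := dvd_refl _
      constructor
      · rw [eval_iter_deriv_zero hdvd hj (by norm_num : (1:ℝ)^2 = 1), zero_mul]
      · rw [eval_iter_deriv_zero hdvd hj (by norm_num : ((-1):ℝ)^2 = 1), zero_mul]
  rw [ibp_iter K (Gp lam) v hbd]
  have hvK : v.coeff K = 0 := by
    rw [hv, hsdef, coeff_mul_X_pow']
    rcases Nat.eq_zero_or_pos mm with rfl | hmm
    · rw [if_neg (by omega)]
    · rw [if_pos (by omega)]
      have hodd : Odd (K - (lam - mm + 1)) := by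
        refine ⟨mm - 1, by omega⟩
      exact coeff_A_odd mm _ hodd
  have hiter : derivative^[K] v
      = C (((K+1)! : ℝ) * v.coeff (K+1)) * X + C ((K ! : ℝ) * v.coeff K) := by
    exact iter_deriv_of_deg_le v K hdegv
  have hc2 : (fun x : ℝ => (Gp lam).eval x * (derivative^[K] v).eval x)
      = fun x : ℝ => (((K+1)! : ℝ) * v.coeff (K+1)) * (x * (Gp lam).eval x) := by
    funext x
    rw [hiter, hvK]
    simp only [eval_add, eval_mul, eval_C, eval_X, mul_zero, add_zero]
    ring
  rw [hc2, intervalIntegral.integral_const_mul, int_x_Gp]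
  simp

lemma master (lam mm : ℕ) (hm : mm ≤ lam) (s : ℝ[X]) (hs : s.natDegree ≤ lam - mm + 1) :
    ∫ x in (-1:ℝ)..1, (1 - x^2)^mm * ((W lam mm).eval x * s.eval x)
      = Phi lam mm * s.coeff (lam - mm) := by
  set a := s.coeff (lam - mm + 1) with ha
  set t : ℝ[X] := s - C a * X^(lam - mm + 1) with ht
  have hts : s = t + C a * X^(lam-mm+1) := by rw [ht]; ring
  have hdegt : t.natDegree ≤ lam - mm := by
    apply natDegree_le_pred (d := lam - mm)
    · refine le_trans (natDegree_sub_le _ _) ?_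
      refine max_le hs (le_trans (natDegree_C_mul_le _ _) ?_)
      rw [natDegree_X_pow]
    · rw [ht, coeff_sub, coeff_C_mul, coeff_X_pow, if_pos rfl, mul_one, ha, sub_self]
  have hsplit : (fun x : ℝ => (1 - x^2)^mm * ((W lam mm).eval x * s.eval x))
      = fun x : ℝ => (1 - x^2)^mm * ((W lam mm).eval x * t.eval x)
          + a * ((1 - x^2)^mm * ((W lam mm).eval x * ((X:ℝ[X])^(lam-mm+1)).eval x)) := by
    funext x
    rw [hts]
    simp only [eval_add, eval_mul, eval_C, eval_pow, eval_X]
    ring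
  rw [hsplit, intervalIntegral.integral_add, intervalIntegral.integral_const_mul,
    master0 lam mm hm t hdegt, masterX lam mm hm]
  · have hcoeff : t.coeff (lam - mm) = s.coeff (lam - mm) := by
      rw [ht, coeff_sub, coeff_C_mul, coeff_X_pow, if_neg (by omega), mul_zero, sub_zero]
    rw [hcoeff]
    ring
  · exact wInt mm (W lam mm) t _ _
  · apply IntervalIntegrable.const_mul
    exact wInt mm (W lam mm) _ _ _

/-! ### Parity -/

lemma comp_neg_iterG (l : ℕ) : ∀ k : ℕ,
    (derivative^[k] (Gp l)).comp (-X) = C ((-1:ℝ)^k) * derivative^[k] (Gp l) := by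
  intro k
  induction k with
  | zero =>
    simp only [Function.iterate_zero_apply, pow_zero, map_one, one_mul, Gp]
    rw [pow_comp, sub_comp, pow_comp, X_comp, one_comp]
    ring_nf
  | succ k ih =>
    have h1 : derivative ((derivative^[k] (Gp l)).comp (-X))
        = derivative (-X) * (derivative^[k+1] (Gp l)).comp (-X) := by
      rw [derivative_comp, Function.iterate_succ_apply']
    rw [ih] at h1
    have h2 : derivative (C ((-1:ℝ)^k) * derivative^[k] (Gp l))
        = C ((-1:ℝ)^k) * derivative^[k+1] (Gp l) := by
      rw [derivative_C_mul, Function.iterate_succ_apply']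
    rw [h2] at h1
    have h3 : derivative (-X : ℝ[X]) = -1 := by simp
    rw [h3] at h1
    have h4 : C ((-1:ℝ)^(k+1)) = (-1:ℝ[X]) * C ((-1:ℝ)^k) := by
      rw [pow_succ, map_mul]
      simp [mul_comm]
    rw [h4]
    calc (derivative^[k+1] (Gp l)).comp (-X)
        = (-1:ℝ[X])* (-1 * (derivative^[k+1] (Gp l)).comp (-X)) := by ring
      _ = (-1:ℝ[X]) * (C ((-1:ℝ)^k) * derivative^[k+1] (Gp l)) := by rw [← h1]
      _ = _ := by ring

lemma eval_W_neg (l m : ℕ) (x : ℝ) :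
    (W l m).eval (-x) = (-1:ℝ)^(l+m) * (W l m).eval x := by
  rw [W_eq]
  have h1 : (derivative^[l+m] (Gp l)).eval (-x)
      = ((derivative^[l+m] (Gp l)).comp (-X)).eval x := by
    rw [eval_comp]
    simp
  rw [eval_mul, eval_C, h1, comp_neg_iterG l (l+m)]
  rw [eval_mul, eval_C, eval_mul, eval_C]
  ring

/-! ### Positivity : a polynomial with vanishing weighted L² norm is zero -/

lemma poly_zero_of_integral_zero (mm : ℕ) (U : ℝ[X])
    (h : ∫ x in (-1:ℝ)..1, (1 - x^2)^mm * (U.eval x * U.eval x) = 0) : U = 0 := by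
  by_contra hU
  set f : ℝ → ℝ := fun x => (1 - x^2)^mm * (U.eval x * U.eval x) with hf
  have hcont : Continuous f :=
    ((continuous_const.sub (continuous_pow 2)).pow mm).mul (U.continuous.mul U.continuous)
  have hroots : {x : ℝ | U.IsRoot x}.Finite := Polynomial.finite_setOf_isRoot hU
  have hinf : (Set.Ioo (-1:ℝ) 1).Infinite := Set.Ioo_infinite (by norm_num)
  obtain ⟨x₀, hx₀⟩ := (hinf.diff hroots).nonempty
  have hx₀I : x₀ ∈ Set.Ioo (-1:ℝ) 1 := hx₀.1
  have hx₀U : U.eval x₀ ≠ 0 := hx₀.2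
  have hopen : IsOpen ({x : ℝ | U.eval x ≠ 0} ∩ Set.Ioo (-1) 1) := by
    refine IsOpen.inter ?_ isOpen_Ioo
    exact isOpen_compl_iff.mpr (isClosed_eq U.continuous continuous_const)
  obtain ⟨ε, hε, hball⟩ := Metric.isOpen_iff.mp hopen x₀ ⟨hx₀U, hx₀I⟩
  set a := x₀ - ε/2 with hadef
  set b := x₀ + ε/2 with hbdef
  have hsub : Set.Icc a b ⊆ {x : ℝ | U.eval x ≠ 0} ∩ Set.Ioo (-1) 1 := by
    intro z hz
    apply hball
    rw [Metric.mem_ball, Real.dist_eq, abs_sub_lt_iff]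
    rcases hz with ⟨hz1, hz2⟩
    constructor <;> [skip; skip] <;> simp only [hadef, hbdef] at hz1 hz2 <;> linarith
  have hab : a < b := by simp only [hadef, hbdef]; linarith
  have ha1 : (-1:ℝ) ≤ a := by
    have := (hsub (Set.left_mem_Icc.mpr hab.le)).2.1
    linarith
  have hb1 : b ≤ 1 := by
    have := (hsub (Set.right_mem_Icc.mpr hab.le)).2.2
    linarith
  have hnn : ∀ u v : ℝ, (-1:ℝ) ≤ u → v ≤ 1 → u ≤ v → 0 ≤ ∫ x in u..v, f x := by
    intro u v hu hv huv
    apply intervalIntegral.integral_nonneg huv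
    intro z hz
    have hz2 : (0:ℝ) ≤ 1 - z^2 := by
      rcases hz with ⟨hz1, hz2⟩
      nlinarith
    exact mul_nonneg (pow_nonneg hz2 _) (mul_self_nonneg _)
  have hmid : 0 < ∫ x in a..b, f x := by
    apply intervalIntegral.intervalIntegral_pos_of_pos_on
      (hcont.intervalIntegrable a b) ?_ hab
    intro z hz
    have hz' := hsub (Set.mem_Icc_of_Ioo hz)
    have h1 : (0:ℝ) < 1 - z^2 := by
      rcases hz'.2 with ⟨u1, u2⟩
      nlinarith
    have h3 : 0 < U.eval z * U.eval z := mul_self_pos.mpr hz'.1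
    show 0 < (1 - z^2)^mm * (U.eval z * U.eval z)
    exact mul_pos (pow_pos h1 _) h3
  have hsplit : (∫ x in (-1:ℝ)..1, f x)
      = (∫ x in (-1:ℝ)..a, f x) + (∫ x in a..b, f x) + (∫ x in b..(1:ℝ), f x) := by
    rw [intervalIntegral.integral_add_adjacent_intervals (hcont.intervalIntegrable _ _)
      (hcont.intervalIntegrable _ _), intervalIntegral.integral_add_adjacent_intervals
      (hcont.intervalIntegrable _ _) (hcont.intervalIntegrable _ _)]
  have h1 := hnn (-1) a (le_refl _) (by linarith) (by linarith)
  have h2 := hnn b 1 (by linarith) (le_refl _) (by linarith)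
  rw [hsplit] at h
  linarith

/-! ### leading coefficients -/

lemma derivative_W (l m : ℕ) : derivative (W l m) = W l (m+1) := by
  rw [W, W, Function.iterate_succ_apply']

noncomputable def bW (l m : ℕ) : ℝ := cc l * ((2*l).descFactorial (l+m) : ℝ)

lemma coeff_W_top'' (l m : ℕ) (hm : m ≤ l) : (W l m).coeff (l - m) = bW l m :=
  coeff_W_top l m hm

lemma bW_pos (l m : ℕ) (hm : m ≤ l) : 0 < bW l m := by
  unfold bW
  have h : 0 < (2*l).descFactorial (l+m) := by
    have hne : (2*l).descFactorial (l+m) ≠ 0 := by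
      rw [Ne, Nat.descFactorial_eq_zero_iff_lt]
      omega
    exact Nat.pos_of_ne_zero hne
  have : (0:ℝ) < ((2*l).descFactorial (l+m) : ℝ) := by exact_mod_cast h
  exact mul_pos (cc_pos l) this

lemma bW_succ (lam mm : ℕ) (hm : mm ≤ lam) :
    bW (lam+1) (mm+1) = ((lam:ℝ)+1-mm) * bW (lam+1) mm := by
  unfold bW
  have h : (2*(lam+1)).descFactorial ((lam+1)+(mm+1))
      = (2*(lam+1) - ((lam+1)+mm)) * (2*(lam+1)).descFactorial ((lam+1)+mm) := by
    rw [show (lam+1)+(mm+1) = ((lam+1)+mm)+1 by omega, Nat.descFactorial_succ]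
  rw [h, show 2*(lam+1) - ((lam+1)+mm) = lam+1-mm by omega]
  rw [Nat.cast_mul, Nat.cast_sub (by omega : mm ≤ lam+1)]
  push_cast
  ring

lemma Jv_pos (l : ℕ) : 0 < Jv l := by
  rw [Jv_formula]
  have h1 : (0:ℝ) < ((l)! : ℝ) := by exact_mod_cast Nat.factorial_pos l
  have h2 : (0:ℝ) < ((2*l+1)! : ℝ) := by exact_mod_cast Nat.factorial_pos (2*l+1)
  positivity

lemma Phi_pos (lam mm : ℕ) : 0 < Phi lam mm := by
  unfold Phi
  have h1 : (0:ℝ) < (((lam+mm))! : ℝ) := by exact_mod_cast Nat.factorial_pos _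
  exact mul_pos (mul_pos (cc_pos lam) h1) (Jv_pos lam)

lemma cc_succ (l : ℕ) : cc (l+1) = cc l / (2*((l:ℝ)+1)) := by
  unfold cc
  rw [pow_succ, Nat.factorial_succ]
  have h1 : (0:ℝ) < ((l)! : ℝ) := by exact_mod_cast Nat.factorial_pos l
  have h2 : (0:ℝ) < (2:ℝ)^l := by positivity
  push_cast
  field_simp

lemma Phi_identity (lam mm : ℕ) :
    Phi (lam+1) (mm+1) + ((lam:ℝ)+1-mm) * Phi (lam+1) mm = ((lam:ℝ)+1+mm) * Phi lam mm := by
  unfold Phi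
  rw [cc_succ, Jv_succ]
  have e1 : ((((lam+1)+(mm+1)))! : ℝ) = ((lam:ℝ)+mm+2) * ((lam:ℝ)+mm+1) * (((lam+mm))! : ℝ) := by
    rw [show (lam+1)+(mm+1) = ((lam+mm)+1)+1 by omega, Nat.factorial_succ, Nat.factorial_succ]
    push_cast
    ring
  have e2 : ((((lam+1)+mm))! : ℝ) = ((lam:ℝ)+mm+1) * (((lam+mm))! : ℝ) := by
    rw [show (lam+1)+mm = (lam+mm)+1 by omega, Nat.factorial_succ]
    push_cast
    ring
  rw [e1, e2]
  have h3 : (2*(lam:ℝ)+3) ≠ 0 := by positivity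
  have h4 : ((lam:ℝ)+1) ≠ 0 := by positivity
  field_simp
  ring

/-! ### master applied to monomials -/

lemma master_pow (lam mm : ℕ) (hm : mm ≤ lam) (k : ℕ) (hk : k ≤ lam - mm + 1) :
    ∫ x in (-1:ℝ)..1, (1 - x^2)^mm * ((W lam mm).eval x * x^k)
      = Phi lam mm * (if lam - mm = k then 1 else 0) := by
  have h := master lam mm hm (X^k) (by rw [natDegree_X_pow]; exact hk)
  rw [coeff_X_pow] at h
  rw [← h]
  apply intervalIntegral.integral_congr
  intro x _
  simp

/-! ### the key derivative identity -/

lemma Cident (lam mm : ℕ) (hm : mm ≤ lam) :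
    (1 - X^2 : ℝ[X]) * (W (lam+1) (mm+1))
      = C ((lam:ℝ)+1+mm) * W lam mm - C ((lam:ℝ)+1-mm) * (X * W (lam+1) mm) := by
  set N := lam - mm with hN
  set U : ℝ[X] := (1 - X^2) * (W (lam+1) (mm+1)) - C ((lam:ℝ)+1+mm) * W lam mm
      + C ((lam:ℝ)+1-mm) * (X * W (lam+1) mm) with hU
  suffices hU0 : U = 0 by
    have h := hU.symm.trans hU0
    linear_combination h
  -- degree bound
  have d1 : ((1:ℝ[X]) - X^2).natDegree ≤ 2 := by
    refine le_trans (natDegree_sub_le _ _) ?_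
    simp [natDegree_X_pow]
  have p1 : ((1 - X^2 :ℝ[X]) * (W (lam+1) (mm+1))).natDegree ≤ N + 2 := by
    refine le_trans (natDegree_mul_le) ?_
    have := natDegree_W_le (lam+1) (mm+1)
    omega
  have p2 : (C ((lam:ℝ)+1+mm) * W lam mm).natDegree ≤ N + 2 := by
    refine le_trans (natDegree_C_mul_le _ _) ?_
    have := natDegree_W_le lam mm
    omega
  have p3 : (C ((lam:ℝ)+1-mm) * (X * W (lam+1) mm)).natDegree ≤ N + 2 := by
    refine le_trans (natDegree_C_mul_le _ _) ?_
    refine le_trans (natDegree_mul_le) ?_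
    have := natDegree_W_le (lam+1) mm
    rw [natDegree_X]
    omega
  have hdeg2 : U.natDegree ≤ N + 2 := by
    rw [hU]
    refine le_trans (natDegree_add_le _ _) (max_le (le_trans (natDegree_sub_le _ _)
      (max_le p1 p2)) p3)
  have hcoefftop : U.coeff (N+2) = 0 := by
    rw [hU, coeff_add, coeff_sub]
    have c1 : ((1 - X^2 :ℝ[X]) * (W (lam+1) (mm+1))).coeff (N+2) = -bW (lam+1) (mm+1) := by
      have hx : (1 - X^2 :ℝ[X]) * (W (lam+1) (mm+1))
          = W (lam+1) (mm+1) - X^2 * W (lam+1) (mm+1) := by ring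
      rw [hx, coeff_sub, coeff_X_pow_mul]
      have hz : (W (lam+1) (mm+1)).coeff (N+2) = 0 := by
        apply coeff_eq_zero_of_natDegree_lt
        have := natDegree_W_le (lam+1) (mm+1)
        omega
      have htop : (W (lam+1) (mm+1)).coeff N = bW (lam+1) (mm+1) := by
        have := coeff_W_top'' (lam+1) (mm+1) (by omega)
        rwa [show (lam+1) - (mm+1) = N by omega] at this
      rw [hz, htop, zero_sub]
    have c2 : (C ((lam:ℝ)+1+mm) * W lam mm).coeff (N+2) = 0 := by
      rw [coeff_C_mul]
      rw [coeff_eq_zero_of_natDegree_lt, mul_zero]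
      have := natDegree_W_le lam mm
      omega
    have c3 : (C ((lam:ℝ)+1-mm) * (X * W (lam+1) mm)).coeff (N+2)
        = ((lam:ℝ)+1-mm) * bW (lam+1) mm := by
      rw [coeff_C_mul, show N+2 = (N+1)+1 from rfl, coeff_X_mul]
      have htop : (W (lam+1) mm).coeff (N+1) = bW (lam+1) mm := by
        have := coeff_W_top'' (lam+1) mm (by omega)
        rwa [show (lam+1) - mm = N+1 by omega] at this
      rw [htop]
    rw [c1, c2, c3, bW_succ lam mm hm]
    ring
  have hdeg : U.natDegree ≤ N + 1 := natDegree_le_pred hdeg2 hcoefftop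
  -- inner products
  have hIP : ∀ k, k ≤ N+1 → ∫ x in (-1:ℝ)..1, (1-x^2)^mm * (U.eval x * x^k) = 0 := by
    intro k hk
    have hs : (fun x:ℝ => (1-x^2)^mm * (U.eval x * x^k))
        = fun x:ℝ => ((1-x^2)^(mm+1) * ((W (lam+1) (mm+1)).eval x * x^k)
          - ((lam:ℝ)+1+mm) * ((1-x^2)^mm * ((W lam mm).eval x * x^k)))
          + ((lam:ℝ)+1-mm) * ((1-x^2)^mm * ((W (lam+1) mm).eval x * x^(k+1))) := by
      funext x
      rw [hU]
      simp only [eval_add, eval_sub, eval_mul, eval_C, eval_one, eval_pow, eval_X]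
      ring
    rw [hs, intervalIntegral.integral_add, intervalIntegral.integral_sub,
      intervalIntegral.integral_const_mul, intervalIntegral.integral_const_mul,
      master_pow (lam+1) (mm+1) (by omega) k (by omega),
      master_pow lam mm hm k (by omega),
      master_pow (lam+1) mm (by omega) (k+1) (by omega),
      show (lam+1)-(mm+1) = N by omega, show (lam+1)-mm = N+1 by omega]
    · rcases eq_or_ne N k with rfl | hne
      · have h1 : (if N = N then (1:ℝ) else 0) = 1 := if_pos rfl
        have h2 : (if N+1 = N+1 then (1:ℝ) else 0) = 1 := if_pos rfl
        rw [h1, h2]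
        linear_combination Phi_identity lam mm
      · rw [if_neg hne, if_neg (by omega : ¬ N+1 = k+1)]
        ring
    · exact Continuous.intervalIntegrable (((continuous_const.sub (continuous_pow 2)).pow
        (mm+1)).mul ((W (lam+1) (mm+1)).continuous.mul (continuous_pow k))) _ _
    · exact Continuous.intervalIntegrable (continuous_const.mul (((continuous_const.sub
        (continuous_pow 2)).pow mm).mul ((W lam mm).continuous.mul (continuous_pow k)))) _ _
    · apply IntervalIntegrable.sub
      · exact Continuous.intervalIntegrable (((continuous_const.sub (continuous_pow 2)).pow
          (mm+1)).mul ((W (lam+1) (mm+1)).continuous.mul (continuous_pow k))) _ _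
      · exact Continuous.intervalIntegrable (continuous_const.mul (((continuous_const.sub
          (continuous_pow 2)).pow mm).mul ((W lam mm).continuous.mul (continuous_pow k)))) _ _
    · exact Continuous.intervalIntegrable (continuous_const.mul (((continuous_const.sub
        (continuous_pow 2)).pow mm).mul ((W (lam+1) mm).continuous.mul
        (continuous_pow (k+1))))) _ _
  -- zero norm
  apply poly_zero_of_integral_zero mm
  have hlt : U.natDegree < N + 2 := by omega
  have key : ∀ x : ℝ, (1 - x^2)^mm * (U.eval x * U.eval x)
      = ∑ k ∈ Finset.range (N+2), U.coeff k * ((1 - x^2)^mm * (U.eval x * x^k)) := by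
    intro x
    nth_rewrite 2 [Polynomial.eval_eq_sum_range' hlt x]
    rw [Finset.mul_sum, Finset.mul_sum]
    exact Finset.sum_congr rfl fun k _ => by ring
  rw [intervalIntegral.integral_congr (fun x _ => key x),
    intervalIntegral.integral_finset_sum]
  · refine Finset.sum_eq_zero fun k hk => ?_
    rw [intervalIntegral.integral_const_mul, hIP k (by
      have := Finset.mem_range.mp hk; omega), mul_zero]
  · intro k _
    exact Continuous.intervalIntegrable (continuous_const.mul (((continuous_const.sub
      (continuous_pow 2)).pow mm).mul (U.continuous.mul (continuous_pow k)))) _ _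

end GJaux
end

set_option maxHeartbeats 2000000 in
open GJaux Polynomial in
theorem gauss_jacobi_odd (m n : ℕ) (hn : 0 < n) (y : Fin n → ℝ) (hmono : StrictMono y)
    (hzero : ∀ j, y j ∈ Set.Ioo (0 : ℝ) 1 ∧ nalf m (m + 2 * n + 1) (y j) = 0)
    (hall : ∀ z ∈ Set.Ioo (0 : ℝ) 1, nalf m (m + 2 * n + 1) z = 0 → ∃ j, z = y j)
    (sigma : Fin n → ℝ)
    (hsigma : ∀ j, sigma j = 2 * (2 * m + 4 * n + 3) /
      ((1 - y j ^ 2) * (deriv (nalf m (m + 2 * n + 1)) (y j)) ^ 2))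
    (sigman : ℝ)
    (hsigman : sigman = (2 * m + 4 * n + 3) / (deriv (nalf m (m + 2 * n + 1)) 0) ^ 2)
    (p : Polynomial ℝ) (hdeg : p.natDegree ≤ 4 * n)
    (heven : ∀ t : ℝ, p.eval (-t) = p.eval t) :
    ∫ t in (-1 : ℝ)..1, (1 - t ^ 2) ^ m * p.eval t
      = sigman * p.eval 0 + ∑ j, sigma j * (1 - y j ^ 2) ^ m * p.eval (y j) := by
  classical
  set l : ℕ := m + 2 * n + 1 with hl
  set T : ℝ[X] := GJaux.W l m with hT
  set T' : ℝ[X] := GJaux.W l (m+1) with hT'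
  have hdT : derivative T = T' := GJaux.derivative_W l m
  -- connect nalf with T
  have hleg : ∀ x : ℝ, iteratedDeriv m (legendreP l) x = T.eval x := by
    intro x
    have h2 : (fun y : ℝ => (y^2 - 1)^l) = fun y : ℝ => (GJaux.Gp l).eval y := by
      funext t; simp [GJaux.Gp]
    have h1 : legendreP l = fun t : ℝ => (C (GJaux.cc l) * derivative^[l] (GJaux.Gp l)).eval t := by
      funext t
      unfold legendreP
      rw [h2, GJaux.iteratedDeriv_polyeval]
      simp [GJaux.cc]
    rw [h1, GJaux.iteratedDeriv_polyeval, hT, GJaux.W]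
  set K : ℝ := Real.sqrt ((2 * l + 1) / 2 * ((l - m)! : ℝ) / ((l + m)! : ℝ)) with hKdef
  have hnalf : ∀ x : ℝ, nalf m l x = K * (1 - x^2) ^ ((m:ℝ)/2) * T.eval x := by
    intro x
    unfold nalf
    rw [hleg]
  have hKargpos : 0 < (2 * (l:ℝ) + 1) / 2 * ((l - m)! : ℝ) / ((l + m)! : ℝ) := by
    have f1 : (0:ℝ) < ((l-m)! : ℝ) := by exact_mod_cast Nat.factorial_pos _
    have f2 : (0:ℝ) < ((l+m)! : ℝ) := by exact_mod_cast Nat.factorial_pos _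
    positivity
  have hK2 : K^2 = (2 * (l:ℝ) + 1) / 2 * ((l - m)! : ℝ) / ((l + m)! : ℝ) := by
    rw [hKdef]
    exact Real.sq_sqrt hKargpos.le
  have hKne : K ≠ 0 := by
    rw [hKdef]
    exact (Real.sqrt_pos.mpr hKargpos).ne'
  -- parity
  have hTodd : ∀ x : ℝ, T.eval (-x) = - T.eval x := by
    intro x
    rw [hT, GJaux.eval_W_neg]
    have hodd : Odd (l + m) := ⟨m + n, by omega⟩
    rw [hodd.neg_one_pow]
    ring
  have hT0 : T.eval 0 = 0 := by
    have h := hTodd 0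
    rw [neg_zero] at h
    linarith
  have hT'even : ∀ x : ℝ, T'.eval (-x) = T'.eval x := by
    intro x
    rw [hT', GJaux.eval_W_neg]
    have hev : Even (l + (m+1)) := ⟨m + n + 1, by omega⟩
    rw [hev.neg_one_pow, one_mul]
  -- nodes
  have hy0 : ∀ j, 0 < y j := fun j => (hzero j).1.1
  have hy1 : ∀ j, y j < 1 := fun j => (hzero j).1.2
  set ν : Fin n ⊕ (Fin n ⊕ Unit) → ℝ :=
    Sum.elim y (Sum.elim (fun j => -(y j)) (fun _ => 0)) with hν
  have hν1 : ∀ j, ν (Sum.inl j) = y j := fun j => rfl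
  have hν2 : ∀ j, ν (Sum.inr (Sum.inl j)) = -(y j) := fun j => rfl
  have hν3 : ∀ u, ν (Sum.inr (Sum.inr u)) = 0 := fun _ => rfl
  have hinj : Function.Injective ν := by
    rintro (a | b | c) (a' | b' | c') h <;>
      simp only [hν, Sum.elim_inl, Sum.elim_inr] at h
    · rw [hmono.injective h]
    · exact absurd h (by have := hy0 a; have := hy0 b'; intro hc; linarith)
    · exact absurd h (by have := hy0 a; intro hc; linarith)
    · exact absurd h (by have := hy0 a'; have := hy0 b; intro hc; linarith)
    · have : b = b' := hmono.injective (by linarith [h] : y b = y b')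
      rw [this]
    · exact absurd h (by have := hy0 b; intro hc; linarith)
    · exact absurd h (by have := hy0 a'; intro hc; linarith)
    · exact absurd h (by have := hy0 b'; intro hc; linarith)
    · rfl
  have hcard : Fintype.card (Fin n ⊕ (Fin n ⊕ Unit)) = 2*n+1 := by
    simp [Fintype.card_sum]
    omega
  have hIpos : ∀ i, 0 < 1 - (ν i)^2 := by
    rintro (a | b | c) <;> simp only [hν, Sum.elim_inl, Sum.elim_inr]
    · nlinarith [hy0 a, hy1 a]
    · nlinarith [hy0 b, hy1 b]
    · norm_num
  have hTroot : ∀ i, T.eval (ν i) = 0 := by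
    have hy : ∀ j, T.eval (y j) = 0 := by
      intro j
      have h := (hzero j).2
      rw [hnalf] at h
      have hpos : (0:ℝ) < 1 - (y j)^2 := by nlinarith [hy0 j, hy1 j]
      have hr : (1 - y j^2) ^ ((m:ℝ)/2) ≠ 0 := (Real.rpow_pos_of_pos hpos _).ne'
      rcases mul_eq_zero.mp h with h1 | h2
      · rcases mul_eq_zero.mp h1 with h3 | h4
        · exact absurd h3 hKne
        · exact absurd h4 hr
      · exact h2
    rintro (a | b | c)
    · exact hy a
    · rw [hν2, hTodd, hy b, neg_zero]
    · rw [hν3, hT0]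
  -- degree and leading coefficient of T
  have hm_le : m ≤ l := by omega
  have degT : T.natDegree = 2*n+1 := by
    rw [hT, GJaux.natDegree_W l m hm_le]
    omega
  set bT : ℝ := GJaux.bW l m with hbTdef
  have hbT : 0 < bT := GJaux.bW_pos l m hm_le
  have coeffT : T.coeff (2*n+1) = bT := by
    have := GJaux.coeff_W_top'' l m hm_le
    rwa [show l - m = 2*n+1 by omega] at this
  -- factorization and simple roots
  set Pn : ℝ[X] := ∏ i : Fin n ⊕ (Fin n ⊕ Unit), (X - C (ν i)) with hPn
  have hPmonic : Pn.Monic := monic_prod_of_monic _ _ (fun i _ => monic_X_sub_C _)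
  have hPdeg : Pn.natDegree = 2*n+1 := by
    rw [hPn, natDegree_prod _ _ (fun i _ => X_sub_C_ne_zero _)]
    simp only [natDegree_X_sub_C]
    rw [Finset.sum_const, Finset.card_univ, hcard, smul_eq_mul, mul_one]
  have hfact : T = C bT * Pn := by
    have hE : T - C bT * Pn = 0 := by
      apply Polynomial.eq_zero_of_natDegree_lt_card_of_eval_eq_zero _ hinj
      · intro i
        rw [eval_sub, hTroot i, eval_mul, eval_C, hPn, eval_prod]
        rw [Finset.prod_eq_zero (Finset.mem_univ i) (by simp)]
        ring
      · rw [hcard]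
        have h1 : (T - C bT * Pn).natDegree ≤ 2*n+1 := by
          refine le_trans (natDegree_sub_le _ _) (max_le (by omega) ?_)
          refine le_trans (natDegree_C_mul_le _ _) (by omega)
        have h2 : (T - C bT * Pn).coeff (2*n+1) = 0 := by
          rw [coeff_sub, coeffT, coeff_C_mul]
          have := hPmonic.coeff_natDegree
          rw [hPdeg] at this
          rw [this, mul_one, sub_self]
        have := GJaux.natDegree_le_pred (d := 2*n) (by omega : (T - C bT * Pn).natDegree ≤ 2*n+1) h2
        omega
    exact sub_eq_zero.mp hE
  have hT'ne : ∀ i, T'.eval (ν i) ≠ 0 := by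
    intro i
    rw [← hdT, hfact, derivative_C_mul]
    rw [eval_mul, eval_C]
    have hnodal : Pn = Lagrange.nodal Finset.univ ν := by
      rw [hPn, Lagrange.nodal_eq]
    rw [hnodal, Lagrange.eval_nodal_derivative_eval_node_eq (Finset.mem_univ i),
      Lagrange.eval_nodal]
    refine mul_ne_zero hbT.ne' ?_
    refine Finset.prod_ne_zero_iff.mpr fun j hj => ?_
    have hji : j ≠ i := (Finset.mem_erase.mp hj).1
    exact sub_ne_zero.mpr fun hc => hji (hinj hc.symm)
  -- the Christoffel-type identity
  set W' : ℝ[X] := GJaux.W (m+2*n) m with hW'def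
  have hCid : ∀ i, (1 - (ν i)^2) * T'.eval (ν i) = ((l:ℝ)+m) * W'.eval (ν i) := by
    intro i
    have h := GJaux.Cident (m+2*n) m (by omega)
    have h2 := congrArg (eval (ν i)) h
    simp only [eval_mul, eval_sub, eval_add, eval_C, eval_one, eval_pow, eval_X] at h2
    have hWT : GJaux.W (m+2*n+1) (m+1) = T' := by rw [hT', hl]
    have hWT2 : GJaux.W (m+2*n+1) m = T := by rw [hT, hl]
    rw [hWT, hWT2, hTroot i] at h2
    have hcast : ((m:ℝ)+2*n+1+m) = ((l:ℝ)+m) := by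
      rw [hl]; push_cast; ring
    rw [h2]
    rw [← hW'def] at *
    push_cast
    linear_combination (eval (ν i) W') * hcast
  have hW'ne : ∀ i, W'.eval (ν i) ≠ 0 := by
    intro i h0
    have := hCid i
    rw [h0, mul_zero] at this
    exact absurd this (mul_ne_zero (hIpos i).ne' (hT'ne i))
  -- Lagrange pieces S i
  set S : (Fin n ⊕ (Fin n ⊕ Unit)) → ℝ[X] := fun i => T /ₘ (X - C (ν i)) with hS
  have hTS : ∀ i, (X - C (ν i)) * S i = T :=
    fun i => mul_divByMonic_eq_iff_isRoot.mpr (hTroot i)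
  have hSdeg : ∀ i, (S i).natDegree = 2*n := by
    intro i
    rw [hS]
    simp only
    rw [natDegree_divByMonic _ (monic_X_sub_C _), degT, natDegree_X_sub_C]
    omega
  have hScoeff : ∀ i, (S i).coeff (2*n) = bT := by
    intro i
    have hlc : T.leadingCoeff = (X - C (ν i)).leadingCoeff * (S i).leadingCoeff := by
      rw [← leadingCoeff_mul, hTS i]
    rw [monic_X_sub_C (ν i), one_mul] at hlc
    have h1 : (S i).coeff (2*n) = (S i).leadingCoeff := by
      rw [leadingCoeff, hSdeg i]
    rw [h1, ← hlc, leadingCoeff, degT, coeffT]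
  have hSval : ∀ i, (S i).eval (ν i) = T'.eval (ν i) := by
    intro i
    have h := congrArg derivative (hTS i)
    rw [derivative_mul, derivative_sub, derivative_X, derivative_C, sub_zero, one_mul, hdT] at h
    have h2 := congrArg (eval (ν i)) h
    simp only [eval_add, eval_mul, eval_sub, eval_C, eval_X, sub_self, zero_mul, mul_zero,
      add_zero] at h2
    exact h2
  have hSzero : ∀ i i', i' ≠ i → (S i).eval (ν i') = 0 := by
    intro i i' hne
    have h := congrArg (eval (ν i')) (hTS i)
    rw [hTroot i', eval_mul, eval_sub, eval_X, eval_C] at h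
    rcases mul_eq_zero.mp h with h1 | h2
    · exact absurd (sub_eq_zero.mp h1) fun hc => hne (hinj hc)
    · exact h2
  -- division of p
  set Mo : ℝ[X] := C bT⁻¹ * T with hMo
  have hMomonic : Mo.Monic := by
    have : Mo.leadingCoeff = 1 := by
      rw [hMo, leadingCoeff_mul, leadingCoeff_C, leadingCoeff, degT, coeffT,
        inv_mul_cancel₀ hbT.ne']
    exact this
  have hMone : Mo ≠ 1 := by
    intro hc
    have : Mo.natDegree = 2*n+1 := by
      rw [hMo, natDegree_C_mul (inv_ne_zero hbT.ne'), degT]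
    rw [hc, natDegree_one] at this
    omega
  set r : ℝ[X] := C bT⁻¹ * (p /ₘ Mo) with hr
  set svar : ℝ[X] := p %ₘ Mo with hsvar
  have hps : p = T * r + svar := by
    have h := modByMonic_add_div p Mo
    have hTr : T * r = Mo * (p /ₘ Mo) := by
      rw [hMo, hr]; ring
    rw [hTr]
    linear_combination h.symm
  have hModeg : Mo.natDegree = 2*n+1 := by
    rw [hMo, natDegree_C_mul (inv_ne_zero hbT.ne'), degT]
  have hrdeg : r.natDegree ≤ 2*n := by
    refine le_trans (natDegree_C_mul_le _ _) ?_
    rw [natDegree_divByMonic _ hMomonic, hModeg]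
    omega
  have hsdeg : svar.natDegree ≤ 2*n := by
    have h := natDegree_modByMonic_lt p hMomonic hMone
    rw [hModeg] at h
    rw [hsvar]
    omega
  -- orthogonality kills T * r
  have hIntTr : ∫ x in (-1:ℝ)..1, (1-x^2)^m * (T.eval x * r.eval x) = 0 := by
    have h := GJaux.master l m (by omega) r (by omega)
    rw [hT] at *
    rw [h, coeff_eq_zero_of_natDegree_lt (by omega : r.natDegree < l - m), mul_zero]
  -- the integrals of the Lagrange pieces
  have hMi : ∀ i, ∫ x in (-1:ℝ)..1, (1-x^2)^m * (S i).eval x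
      = GJaux.Phi (m+2*n) m * bT / W'.eval (ν i) := by
    intro i
    set Di : ℝ[X] := (W' - C (W'.eval (ν i))) /ₘ (X - C (ν i)) with hDi
    have hWD : (X - C (ν i)) * Di = W' - C (W'.eval (ν i)) := by
      apply mul_divByMonic_eq_iff_isRoot.mpr
      simp [IsRoot]
    have hW'deg : W'.natDegree ≤ 2*n := by
      rw [hW'def]
      have := GJaux.natDegree_W_le (m+2*n) m
      omega
    have hDdeg : Di.natDegree ≤ 2*n := by
      rw [hDi, natDegree_divByMonic _ (monic_X_sub_C _), natDegree_X_sub_C]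
      have h1 : (W' - C (W'.eval (ν i))).natDegree ≤ 2*n :=
        le_trans (natDegree_sub_le _ _) (max_le hW'deg (le_trans (natDegree_C _).le (by omega)))
      omega
    have hα : ∫ x in (-1:ℝ)..1, (1-x^2)^m * (W'.eval x * (S i).eval x)
        = GJaux.Phi (m+2*n) m * bT := by
      have h := GJaux.master (m+2*n) m (by omega) (S i) (by rw [hSdeg i]; omega)
      rw [hW'def]
      rw [h, show m+2*n - m = 2*n by omega, hScoeff i]
    have hβ : ∫ x in (-1:ℝ)..1, (1-x^2)^m * (W'.eval x * (S i).eval x)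
        = W'.eval (ν i) * ∫ x in (-1:ℝ)..1, (1-x^2)^m * (S i).eval x := by
      have hpt : ∀ x:ℝ, (1-x^2)^m * (W'.eval x * (S i).eval x)
          = (1-x^2)^m * (T.eval x * Di.eval x) + W'.eval (ν i) * ((1-x^2)^m * (S i).eval x) := by
        intro x
        have h1 : W'.eval x = (x - ν i) * Di.eval x + W'.eval (ν i) := by
          have h2 := congrArg (eval x) hWD
          simp only [eval_mul, eval_sub, eval_C, eval_X] at h2
          linarith
        have h2 : T.eval x = (x - ν i) * (S i).eval x := by
          have h3 := congrArg (eval x) (hTS i)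
          simp only [eval_mul, eval_sub, eval_C, eval_X] at h3
          linarith
        rw [h1, h2]
        ring
      rw [intervalIntegral.integral_congr (fun x _ => hpt x),
        intervalIntegral.integral_add (GJaux.wInt m T Di _ _) ?_]
      · have h := GJaux.master l m (by omega) Di (by omega)
        rw [hT] at *
        rw [h, coeff_eq_zero_of_natDegree_lt (by omega : Di.natDegree < l - m), mul_zero,
          zero_add, intervalIntegral.integral_const_mul]
      · apply IntervalIntegrable.const_mul
        apply Continuous.intervalIntegrable
        exact ((continuous_const.sub (continuous_pow 2)).pow m).mul (S i).continuous
    rw [hβ] at hα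
    rw [eq_div_iff (hW'ne i)]
    linarith [hα]
  -- weight in final form
  set κ : ℝ := GJaux.Phi (m+2*n) m * bT * ((l:ℝ)+m) with hκ
  have hlm_ne : ((l:ℝ)+m) ≠ 0 := by positivity
  have hMi' : ∀ i, (T'.eval (ν i))⁻¹ * (GJaux.Phi (m+2*n) m * bT / W'.eval (ν i))
      = κ / ((1 - (ν i)^2) * (T'.eval (ν i))^2) := by
    intro i
    have hW'eq : W'.eval (ν i) = (1-(ν i)^2) * T'.eval (ν i) / ((l:ℝ)+m) := by
      rw [eq_div_iff hlm_ne]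
      linarith [hCid i]
    rw [hW'eq, hκ]
    have h1 := (hIpos i).ne'
    have h2 := hT'ne i
    field_simp
  -- interpolation of svar
  have hinterp : svar = ∑ i, C (svar.eval (ν i) * (T'.eval (ν i))⁻¹) * S i := by
    have hE2 : svar - ∑ i, C (svar.eval (ν i) * (T'.eval (ν i))⁻¹) * S i = 0 := by
      apply Polynomial.eq_zero_of_natDegree_lt_card_of_eval_eq_zero _ hinj
      · intro i₀
        rw [eval_sub, eval_finset_sum]
        have hsum : ∑ i, (C (svar.eval (ν i) * (T'.eval (ν i))⁻¹) * S i).eval (ν i₀)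
            = svar.eval (ν i₀) := by
          rw [Finset.sum_eq_single i₀]
          · rw [eval_mul, eval_C, hSval i₀, mul_assoc, inv_mul_cancel₀ (hT'ne i₀), mul_one]
          · intro i _ hne
            rw [eval_mul, hSzero i i₀ hne.symm, mul_zero]
          · intro h
            exact absurd (Finset.mem_univ i₀) h
        rw [hsum, sub_self]
      · rw [hcard]
        have h1 : (∑ i, C (svar.eval (ν i) * (T'.eval (ν i))⁻¹) * S i).natDegree ≤ 2*n := by
          apply natDegree_sum_le_of_forall_le
          intro i _
          exact le_trans (natDegree_C_mul_le _ _) (le_of_eq (hSdeg i))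
        have := natDegree_sub_le svar (∑ i, C (svar.eval (ν i) * (T'.eval (ν i))⁻¹) * S i)
        omega
    exact sub_eq_zero.mp hE2
  -- the integral of svar
  have hIs : ∫ x in (-1:ℝ)..1, (1-x^2)^m * svar.eval x
      = ∑ i, svar.eval (ν i) * (κ / ((1 - (ν i)^2) * (T'.eval (ν i))^2)) := by
    have hpt : ∀ x:ℝ, (1-x^2)^m * svar.eval x
        = ∑ i, (svar.eval (ν i) * (T'.eval (ν i))⁻¹) * ((1-x^2)^m * (S i).eval x) := by
      intro x
      have h1 : svar.eval x = ∑ i, (svar.eval (ν i) * (T'.eval (ν i))⁻¹) * (S i).eval x := by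
        conv_lhs => rw [hinterp]
        rw [eval_finset_sum]
        exact Finset.sum_congr rfl fun i _ => by rw [eval_mul, eval_C]
      rw [h1, Finset.mul_sum]
      exact Finset.sum_congr rfl fun i _ => by ring
    rw [intervalIntegral.integral_congr (fun x _ => hpt x),
      intervalIntegral.integral_finset_sum]
    · refine Finset.sum_congr rfl fun i _ => ?_
      rw [intervalIntegral.integral_const_mul, hMi i, mul_assoc, hMi' i]
    · intro i _
      apply IntervalIntegrable.const_mul
      apply Continuous.intervalIntegrable
      exact ((continuous_const.sub (continuous_pow 2)).pow m).mul (S i).continuous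
  -- left-hand side as a quadrature sum
  have hLHS : ∫ t in (-1:ℝ)..1, (1 - t^2)^m * p.eval t
      = ∑ i, p.eval (ν i) * (κ / ((1 - (ν i)^2) * (T'.eval (ν i))^2)) := by
    have hpt : ∀ x:ℝ, (1-x^2)^m * p.eval x
        = (1-x^2)^m * (T.eval x * r.eval x) + (1-x^2)^m * svar.eval x := by
      intro x
      conv_lhs => rw [hps]
      rw [eval_add, eval_mul]
      ring
    rw [intervalIntegral.integral_congr (fun x _ => hpt x),
      intervalIntegral.integral_add (GJaux.wInt m T r _ _) ?_, hIntTr, hIs, zero_add]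
    · refine Finset.sum_congr rfl fun i _ => ?_
      have : p.eval (ν i) = svar.eval (ν i) := by
        conv_lhs => rw [hps]
        rw [eval_add, eval_mul, hTroot i, zero_mul, zero_add]
      rw [this]
    · apply Continuous.intervalIntegrable
      exact ((continuous_const.sub (continuous_pow 2)).pow m).mul svar.continuous
    -- the master scalar identity
  have hκK : κ * K^2 = 2*(m:ℝ) + 4*(n:ℝ) + 3 := by
    have hfp : ∀ N : ℕ, ((N ! : ℕ) : ℝ) ≠ 0 := fun N => by
      exact_mod_cast (Nat.factorial_pos N).ne'
    have hdesc : ((2*l).descFactorial (l+m) : ℝ) = ((2*l)! : ℝ) / ((2*n+1)! : ℝ) := by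
      have h := Nat.factorial_mul_descFactorial (show l+m ≤ 2*l by omega)
      rw [show 2*l - (l+m) = 2*n+1 by omega] at h
      have h2 : (((2*n+1)!) : ℝ) * ((2*l).descFactorial (l+m) : ℝ) = ((2*l)! : ℝ) := by
        exact_mod_cast h
      rw [eq_div_iff (hfp (2*n+1))]
      linarith [h2]
    rw [hκ, hK2, hbTdef]
    unfold GJaux.Phi GJaux.bW GJaux.cc
    rw [GJaux.Jv_formula, hdesc]
    rw [show l - m = 2*n+1 by omega]
    have e1 : ((2*l)! : ℝ) = (2*(m:ℝ)+4*n+2) * ((2*(m+2*n)+1)! : ℝ) := by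
      rw [show 2*l = (2*(m+2*n)+1)+1 by omega, Nat.factorial_succ]
      push_cast
      ring
    have e2 : ((l)! : ℝ) = ((m:ℝ)+2*n+1) * (((m+2*n))! : ℝ) := by
      rw [show l = (m+2*n)+1 by omega, Nat.factorial_succ]
      push_cast
      ring
    have e3 : ((l+m)! : ℝ) = ((m:ℝ)+2*n+1+m) * (((m+2*n)+m)! : ℝ) := by
      rw [show l+m = ((m+2*n)+m)+1 by omega, Nat.factorial_succ]
      push_cast
      ring
    have e4 : (2:ℝ)^l = 2 * 2^(m+2*n) := by
      rw [show l = (m+2*n)+1 by omega, pow_succ]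
      ring
    have e5 : (2:ℝ)^(2*(m+2*n)+1) = 2 * ((2:ℝ)^(m+2*n))^2 := by
      rw [pow_succ, two_mul, pow_add]
      ring
    have hl' : ((l:ℕ):ℝ) = (m:ℝ)+2*n+1 := by rw [hl]; push_cast; ring
    rw [e1, e2, e3, e4, e5, hl']
    have p1 := hfp (m+2*n)
    have p2 := hfp ((m+2*n)+m)
    have p3 := hfp (2*(m+2*n)+1)
    have p4 := hfp (2*n+1)
    have p5 : (2:ℝ)^(m+2*n) ≠ 0 := by positivity
    have p6 : (m:ℝ)+2*n+1 ≠ 0 := by positivity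
    have p7 : (m:ℝ)+2*n+1+m ≠ 0 := by positivity
    field_simp
    ring
  -- the derivative of nalf at roots
  have hderiv : ∀ x : ℝ, (1 - x^2) ≠ 0 → T.eval x = 0 →
      deriv (nalf m l) x = K * (1-x^2) ^ ((m:ℝ)/2) * T'.eval x := by
    intro x hx hTx
    have hfun : nalf m l = fun t : ℝ => K * ((1-t^2) ^ ((m:ℝ)/2) * T.eval t) := by
      funext t
      rw [hnalf t]
      ring
    have h1 : HasDerivAt (fun t : ℝ => 1 - t^2) (-(2*x)) x := by
      have := (hasDerivAt_pow 2 x).const_sub 1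
      simpa using this
    have h2 : HasDerivAt (fun t : ℝ => (1-t^2) ^ ((m:ℝ)/2))
        ((-(2*x)) * ((m:ℝ)/2) * (1-x^2) ^ ((m:ℝ)/2 - 1)) x := h1.rpow_const (Or.inl hx)
    have h3 := (h2.mul (T.hasDerivAt x)).const_mul K
    have h4 := h3.deriv
    simp only [Pi.mul_apply] at h4
    rw [hfun, h4, hTx, hdT]
    ring
  have hrpow_sq : ∀ x : ℝ, 0 < 1 - x^2 → ((1-x^2) ^ ((m:ℝ)/2))^2 = (1-x^2)^m := by
    intro x hx
    rw [sq, ← Real.rpow_add hx]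
    have h : (m:ℝ)/2 + (m:ℝ)/2 = (m:ℝ) := by ring
    rw [h, Real.rpow_natCast]
  -- node values of the weights
  have hT'0 : T'.eval 0 ≠ 0 := by
    have := hT'ne (Sum.inr (Sum.inr ()))
    rwa [hν3] at this
  have hσn : sigman = κ / ((1 - (0:ℝ)^2) * (T'.eval 0)^2) := by
    rw [hsigman, hderiv 0 (by norm_num) hT0,
      show (1:ℝ) - (0:ℝ)^2 = 1 by norm_num, Real.one_rpow, mul_one, mul_pow, ← hκK]
    have hK2ne : K^2 ≠ 0 := pow_ne_zero 2 hKne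
    rw [one_mul]
    field_simp
  have hσj : ∀ j, sigma j * (1 - y j^2)^m
      = 2 * (κ / ((1 - (y j)^2) * (T'.eval (y j))^2)) := by
    intro j
    have hyj : T.eval (y j) = 0 := by
      have := hTroot (Sum.inl j)
      rwa [hν1] at this
    have hpos : 0 < 1 - (y j)^2 := by
      have := hIpos (Sum.inl j)
      rwa [hν1] at this
    have hT'y : T'.eval (y j) ≠ 0 := by
      have := hT'ne (Sum.inl j)
      rwa [hν1] at this
    rw [hsigma j, hderiv (y j) hpos.ne' hyj, ← hκK, mul_pow, mul_pow, hrpow_sq _ hpos]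
    have hK2ne : K^2 ≠ 0 := pow_ne_zero 2 hKne
    have hpm : ((1:ℝ)-(y j)^2)^m ≠ 0 := pow_ne_zero _ hpos.ne'
    field_simp
  -- final assembly
  rw [hLHS, Fintype.sum_sum_type, Fintype.sum_sum_type]
  have hunit : ∑ u : Unit, p.eval (ν (Sum.inr (Sum.inr u)))
      * (κ / ((1 - (ν (Sum.inr (Sum.inr u)))^2) * (T'.eval (ν (Sum.inr (Sum.inr u))))^2))
      = p.eval 0 * (κ / ((1 - (0:ℝ)^2) * (T'.eval 0)^2)) := by
    rw [Fintype.sum_unique]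
    rw [hν3]
  have hneg : ∀ j, p.eval (ν (Sum.inr (Sum.inl j)))
      * (κ / ((1 - (ν (Sum.inr (Sum.inl j)))^2) * (T'.eval (ν (Sum.inr (Sum.inl j))))^2))
      = p.eval (y j) * (κ / ((1 - (y j)^2) * (T'.eval (y j))^2)) := by
    intro j
    rw [hν2, heven (y j), neg_sq]
    have : T'.eval (-(y j)) = T'.eval (y j) := hT'even (y j)
    rw [this]
  have hposj : ∀ j, p.eval (ν (Sum.inl j))
      * (κ / ((1 - (ν (Sum.inl j))^2) * (T'.eval (ν (Sum.inl j)))^2))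
      = p.eval (y j) * (κ / ((1 - (y j)^2) * (T'.eval (y j))^2)) := by
    intro j
    rw [hν1]
  rw [hunit, Finset.sum_congr rfl (fun j _ => hneg j), Finset.sum_congr rfl (fun j _ => hposj j)]
  rw [hσn]
  have hRHSsum : ∑ j, sigma j * (1 - y j ^ 2)^m * p.eval (y j)
      = ∑ j, 2 * (p.eval (y j) * (κ / ((1 - (y j)^2) * (T'.eval (y j))^2))) := by
    refine Finset.sum_congr rfl fun j _ => ?_
    rw [hσj j]
    ring
  rw [hRHSsum, ← Finset.mul_sum]
  ring
end

section
/- For any nonnegative integer m and integers l, l' ≥ m, the normalized associated Legendre functions satisfy the orthonormality relation ∫_{-1}^{1} P̄^m_l(x) P̄^m_{l'}(x) dx = δ_{l l'}. -/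
open scoped Nat

namespace NalfOrthAux
open Polynomial

/-- integral of a polynomial over [-1,1] -/
noncomputable def Ip (p : Polynomial ℝ) : ℝ := ∫ x in (-1:ℝ)..1, p.eval x

lemma Ip_deriv (p : Polynomial ℝ) : Ip (derivative p) = p.eval 1 - p.eval (-1) := by
  unfold Ip
  exact intervalIntegral.integral_eq_sub_of_hasDerivAt (fun x _ => p.hasDerivAt x)
    ((derivative p).continuous.intervalIntegrable _ _)

lemma Ip_add (p q : Polynomial ℝ) : Ip (p + q) = Ip p + Ip q := by
  unfold Ip
  simp only [eval_add]
  exact intervalIntegral.integral_add (p.continuous.intervalIntegrable _ _)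
    (q.continuous.intervalIntegrable _ _)

lemma Ip_C_mul (r : ℝ) (p : Polynomial ℝ) : Ip (C r * p) = r * Ip p := by
  unfold Ip
  simp only [eval_mul, eval_C]
  exact intervalIntegral.integral_const_mul _ _

lemma Ip_sub (p q : Polynomial ℝ) : Ip (p - q) = Ip p - Ip q := by
  have := Ip_add (p - q) q
  simp only [sub_add_cancel] at this
  linarith

lemma Ip_zero : Ip 0 = 0 := by unfold Ip; simp

lemma Ip_one : Ip 1 = 2 := by unfold Ip; simp; norm_num

/-- integration by parts -/
lemma Ip_ibp (p q : Polynomial ℝ) :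
    Ip (derivative p * q) = p.eval 1 * q.eval 1 - p.eval (-1) * q.eval (-1)
      - Ip (p * derivative q) := by
  have h := Ip_deriv (p * q)
  rw [derivative_mul, Ip_add] at h
  simp only [eval_mul] at h
  linarith

noncomputable def Rp (k l : ℕ) : Polynomial ℝ := derivative^[k] ((X^2 - 1)^l)

lemma Rp_succ (k l : ℕ) : Rp (k+1) l = derivative (Rp k l) := by
  unfold Rp; rw [Function.iterate_succ_apply']

lemma Rp_zero (l : ℕ) : Rp 0 l = (X^2-1)^l := rfl

lemma Rp_base (l : ℕ) : (X^2 - 1) * Rp 1 l = C (2*(l:ℝ)) * (X * Rp 0 l) := by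
  unfold Rp
  simp only [Function.iterate_one, Function.iterate_zero_apply]
  rw [derivative_pow]
  simp only [derivative_sub, derivative_one, derivative_X_pow]
  apply Polynomial.funext; intro x
  cases l with
  | zero => simp
  | succ n =>
    simp only [Nat.add_sub_cancel, eval_mul, eval_pow, eval_sub, eval_one, eval_X, eval_C,
      Nat.cast_succ, Nat.cast_ofNat, eval_natCast, sub_zero]
    push_cast
    ring

lemma Rp_key (l : ℕ) : ∀ k : ℕ, (X^2 - 1) * Rp (k+2) l =
    C (2*(l:ℝ) - 2*k - 2) * (X * Rp (k+1) l) + C (((k:ℝ)+1)*(2*l - k)) * Rp k l := by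
  intro k
  induction k with
  | zero =>
    have h := congrArg derivative (Rp_base l)
    simp only [derivative_add, derivative_mul, derivative_C, derivative_X, derivative_sub,
      derivative_one, derivative_X_pow, ← Rp_succ] at h
    apply Polynomial.funext; intro x
    have h2 := congrArg (Polynomial.eval x) h
    simp only [eval_mul, eval_add, eval_sub, eval_pow, eval_C, eval_X, eval_one, eval_zero,
      eval_natCast, zero_mul, sub_zero, Nat.cast_ofNat] at h2 ⊢
    push_cast at h2 ⊢
    nlinarith [h2]
  | succ k ih =>
    have h := congrArg derivative ih
    simp only [derivative_add, derivative_mul, derivative_C, derivative_X, derivative_sub,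
      derivative_one, derivative_X_pow, ← Rp_succ] at h
    apply Polynomial.funext; intro x
    have h2 := congrArg (Polynomial.eval x) h
    simp only [eval_mul, eval_add, eval_sub, eval_pow, eval_C, eval_X, eval_one, eval_zero,
      eval_natCast, zero_mul, sub_zero, Nat.cast_ofNat] at h2 ⊢
    push_cast at h2 ⊢
    nlinarith [h2]

lemma Rp_S (l k : ℕ) : derivative ((1 - X^2)^(k+1) * Rp (l+k+1) l) =
    C (-(((l:ℝ)+k+1) * ((l:ℝ)-k))) * ((1-X^2)^k * Rp (l+k) l) := by
  have key := Rp_key l (l+k)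
  rw [derivative_mul, derivative_pow, ← Rp_succ]
  simp only [derivative_sub, derivative_one, derivative_X_pow, Nat.add_sub_cancel]
  apply Polynomial.funext; intro x
  have h2 := congrArg (Polynomial.eval x) key
  have e1 : Rp (l+k+2) l = Rp (l+k+1+1) l := by ring_nf
  rw [e1] at h2
  simp only [eval_mul, eval_add, eval_sub, eval_pow, eval_C, eval_X, eval_one, eval_zero,
    eval_natCast, eval_neg, zero_mul, zero_sub, sub_zero, Nat.cast_ofNat] at h2 ⊢
  push_cast at h2 ⊢
  linear_combination (-(1-x^2)^k) * h2

lemma Rp_dvd (l : ℕ) : ∀ k, k ≤ l → ((X:Polynomial ℝ)^2-1)^(l-k) ∣ Rp k l := by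
  intro k
  induction k with
  | zero => intro _; simp [Rp]
  | succ k ih =>
    intro hk
    obtain ⟨c, hc⟩ := ih (le_of_lt hk)
    obtain ⟨j, hj⟩ : ∃ j, l - k = j + 1 := ⟨l - k - 1, by omega⟩
    have hj2 : l - (k+1) = j := by omega
    rw [hj2]
    refine ⟨C ((j:ℝ)+1) * (2*X) * c + (X^2-1) * derivative c, ?_⟩
    rw [Rp_succ, hc, hj, derivative_mul, derivative_pow]
    simp only [Nat.add_sub_cancel, derivative_sub, derivative_one, derivative_X_pow, sub_zero]
    apply Polynomial.funext; intro x
    simp only [eval_mul, eval_add, eval_sub, eval_pow, eval_C, eval_X, eval_one,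
      eval_natCast, eval_ofNat, Nat.cast_ofNat]
    push_cast
    ring

lemma Rp_bdry (l k : ℕ) (hk : k < l) {x : ℝ} (hx : x^2 = 1) : (Rp k l).eval x = 0 := by
  obtain ⟨c, hc⟩ := Rp_dvd l k (le_of_lt hk)
  obtain ⟨j, hj⟩ : ∃ j, l - k = j + 1 := ⟨l - k - 1, by omega⟩
  rw [hc, hj]
  simp [hx]

lemma natDeg_helper (l : ℕ) : (((X:Polynomial ℝ)^2-1)^l).natDegree = 2*l := by
  have h2 : ((X:Polynomial ℝ)^2-1).natDegree = 2 := by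
    have := Polynomial.natDegree_X_pow_sub_C (R := ℝ) (n := 2) (r := (1:ℝ))
    simpa using this
  rw [Polynomial.natDegree_pow, h2, mul_comm]

lemma monic_helper (l : ℕ) : (((X:Polynomial ℝ)^2-1)^l).Monic := by
  have hml : ((X:Polynomial ℝ)^2-1).Monic := by
    have := Polynomial.monic_X_pow_sub_C (1:ℝ) (n := 2) (by norm_num)
    simpa using this
  exact hml.pow l

lemma Rp_top (l : ℕ) : Rp (2*l) l = C ((Nat.factorial (2*l)) : ℝ) := by
  cases l with
  | zero => simp [Rp]
  | succ n =>
    have hmp := monic_helper (n+1)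
    have hdeg1 : (((X:Polynomial ℝ)^2-1)^(n+1)).degree = ((2*(n+1) : ℕ) : WithBot ℕ) := by
      rw [Polynomial.degree_eq_natDegree hmp.ne_zero, natDeg_helper]
    have hm : ((X:Polynomial ℝ)^2-1)^(n+1) = X^(2*(n+1)) + ((X^2-1)^(n+1) - X^(2*(n+1))) := by
      ring
    have hdeg : (((X:Polynomial ℝ)^2-1)^(n+1) - X^(2*(n+1))).natDegree < 2*(n+1) := by
      by_cases h0 : ((X:Polynomial ℝ)^2-1)^(n+1) - X^(2*(n+1)) = 0
      · rw [h0]; simpa using by omega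
      · have hd := Polynomial.degree_sub_lt (p := ((X:Polynomial ℝ)^2-1)^(n+1))
          (q := X^(2*(n+1)))
          (by rw [hdeg1, Polynomial.degree_X_pow]) hmp.ne_zero
          (by rw [hmp.leadingCoeff, (Polynomial.monic_X_pow _).leadingCoeff])
        rw [hdeg1] at hd
        exact (Polynomial.natDegree_lt_iff_degree_lt h0).2 hd
    show derivative^[2*(n+1)] (((X:Polynomial ℝ)^2-1)^(n+1)) = _
    rw [hm, iterate_map_add, Polynomial.iterate_derivative_eq_zero hdeg, add_zero,
      iterate_derivative_X_pow_eq_C_mul]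
    simp [Nat.descFactorial_self]

lemma Irec (l l' k : ℕ) :
    Ip ((1-X^2)^(k+1) * (Rp (l+k+1) l * Rp (l'+k+1) l')) =
    (((l:ℝ)+k+1) * ((l:ℝ)-k)) * Ip ((1-X^2)^k * (Rp (l+k) l * Rp (l'+k) l')) := by
  have e1 : (1-X^2)^(k+1) * (Rp (l+k+1) l * Rp (l'+k+1) l')
      = ((1-X^2)^(k+1) * Rp (l+k+1) l) * derivative (Rp (l'+k) l') := by
    rw [← Rp_succ]; ring
  have hibp := Ip_ibp ((1-X^2)^(k+1) * Rp (l+k+1) l) (Rp (l'+k) l')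
  rw [Rp_S] at hibp
  have hb1 : (((1:Polynomial ℝ)-X^2)^(k+1) * Rp (l+k+1) l).eval 1 = 0 := by simp
  have hb2 : (((1:Polynomial ℝ)-X^2)^(k+1) * Rp (l+k+1) l).eval (-1) = 0 := by
    simp only [eval_mul, eval_pow, eval_sub, eval_one, eval_X]
    norm_num
  rw [hb1, hb2] at hibp
  have e2 : C (-(((l:ℝ)+k+1) * ((l:ℝ)-k))) * ((1-X^2)^k * Rp (l+k) l) * Rp (l'+k) l'
      = C (-(((l:ℝ)+k+1) * ((l:ℝ)-k))) * ((1-X^2)^k * (Rp (l+k) l * Rp (l'+k) l')) := by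
    ring
  rw [e2, Ip_C_mul] at hibp
  rw [e1]
  linarith [hibp]

lemma Iclosed (l l' : ℕ) : ∀ k, Ip ((1-X^2)^k * (Rp (l+k) l * Rp (l'+k) l')) =
    (∏ j ∈ Finset.range k, (((l:ℝ)+j+1) * ((l:ℝ)-j))) * Ip (Rp l l * Rp l' l') := by
  intro k
  induction k with
  | zero => simp
  | succ k ih =>
    rw [Finset.prod_range_succ]
    rw [show l + (k+1) = (l+k)+1 from rfl, show l' + (k+1) = (l'+k)+1 from rfl,
      Irec l l' k, ih]
    ring

lemma cross_aux (a b : ℕ) : ∀ j, j ≤ a →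
    Ip (Rp a a * Rp b b) = (-1:ℝ)^j * Ip (Rp (a-j) a * Rp (b+j) b) := by
  intro j
  induction j with
  | zero => intro _; simp
  | succ j ih =>
    intro hj
    have h1 := ih (by omega)
    obtain ⟨e⟩ : a - j = (a-(j+1))+1 ∧ True := ⟨by omega, trivial⟩
    have hibp := Ip_ibp (Rp (a-(j+1)) a) (Rp (b+j) b)
    rw [← Rp_succ, ← e] at hibp
    rw [Rp_bdry a (a-(j+1)) (by omega) (by norm_num),
        Rp_bdry a (a-(j+1)) (by omega) (by norm_num)] at hibp
    rw [← Rp_succ] at hibp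
    rw [h1, hibp]
    ring

lemma cross (l l' : ℕ) (h : l' < l) : Ip (Rp l l * Rp l' l') = 0 := by
  have h1 := cross_aux l l' l (le_refl l)
  have h2 : Rp (l'+l) l' = 0 := by
    unfold Rp
    apply Polynomial.iterate_derivative_eq_zero
    rw [natDeg_helper]
    omega
  rw [h2, mul_zero, Ip_zero] at h1
  rw [h1]; ring

lemma diag (l : ℕ) : Ip (Rp l l * Rp l l) = ((2*l).factorial : ℝ) * Ip ((1-X^2)^l) := by
  have h1 := cross_aux l l l (le_refl l)
  have h2 : Rp (l+l) l = C (((2*l).factorial : ℝ)) := by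
    rw [show l + l = 2*l from by ring, Rp_top]
  rw [h2, Nat.sub_self] at h1
  have h3 : Rp 0 l * C (((2*l).factorial : ℝ))
      = C ((-1:ℝ)^l * ((2*l).factorial : ℝ)) * (1-X^2)^l := by
    show ((X:Polynomial ℝ)^2-1)^l * _ = _
    rw [map_mul]
    have : ((X:Polynomial ℝ)^2-1)^l = C ((-1:ℝ)^l) * (1-X^2)^l := by
      have e0 : ((X:Polynomial ℝ)^2-1) = C (-1) * (1-X^2) := by
        apply Polynomial.funext; intro x
        simp only [eval_mul, eval_sub, eval_pow, eval_one, eval_X, eval_C]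
        ring
      rw [e0, mul_pow, ← map_pow]
    rw [this]; ring
  rw [h3, Ip_C_mul] at h1
  rw [h1]
  have hm1 : (-1:ℝ)^l * (-1:ℝ)^l = 1 := by
    rw [← pow_add, ← two_mul, pow_mul]
    norm_num
  linear_combination (((2*l).factorial : ℝ) * Ip ((1-X^2)^l)) * hm1

lemma Jrec (l : ℕ) : (2*(l:ℝ)+3) * Ip ((1-X^2)^(l+1)) = (2*(l:ℝ)+2) * Ip ((1-X^2)^l) := by
  have hg : derivative ((X : Polynomial ℝ) * (1-X^2)^(l+1)) =
      C (2*(l:ℝ)+3) * (1-X^2)^(l+1) - C (2*(l:ℝ)+2) * (1-X^2)^l := by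
    rw [derivative_mul, derivative_X, derivative_pow]
    simp only [derivative_sub, derivative_one, derivative_X_pow, Nat.add_sub_cancel]
    apply Polynomial.funext; intro x
    simp only [eval_mul, eval_add, eval_sub, eval_pow, eval_C, eval_X, eval_one, eval_natCast,
      Nat.cast_ofNat, one_mul, zero_sub, eval_neg, pow_one]
    push_cast
    ring
  have h := Ip_deriv ((X : Polynomial ℝ) * (1-X^2)^(l+1))
  rw [hg, Ip_sub, Ip_C_mul, Ip_C_mul] at h
  simp only [eval_mul, eval_pow, eval_sub, eval_one, eval_X] at h
  norm_num at h
  linarith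

lemma Jval : ∀ l : ℕ, Ip ((1-X^2)^l) * (((2*l+1)!) : ℝ) = 2^(2*l+1) * ((l ! : ℝ))^2 := by
  intro l
  induction l with
  | zero => simp [Ip_one, Nat.factorial]
  | succ n ih =>
    have hrec := Jrec n
    have hf : (((2*(n+1)+1)!) : ℝ) = (2*(n:ℝ)+3) * ((2*(n:ℝ)+2) * (((2*n+1)!) : ℝ)) := by
      rw [show 2*(n+1)+1 = (2*n+2)+1 from by ring, Nat.factorial_succ,
        show 2*n+2 = (2*n+1)+1 from by ring, Nat.factorial_succ]
      push_cast
      ring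
    rw [hf]
    have hfs : ((n+1)! : ℝ) = ((n:ℝ)+1) * (n ! : ℝ) := by
      rw [Nat.factorial_succ]; push_cast; ring
    rw [hfs]
    linear_combination ((2*(n:ℝ)+2) * (((2*n+1)!) : ℝ)) * hrec + (2*(n:ℝ)+2)^2 * ih

lemma prodcast (l : ℕ) : ∀ m : ℕ, m ≤ l →
    (∏ j ∈ Finset.range m, (((l:ℝ)+j+1) * ((l:ℝ)-j))) * (((l-m)!) : ℝ) * ((l !) : ℝ)
      = (((l+m)!) : ℝ) * ((l !) : ℝ) := by
  intro m
  induction m with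
  | zero => simp
  | succ m ih =>
    intro hm
    have h1 := ih (by omega)
    rw [Finset.prod_range_succ]
    have hfs : (((l-m)!) : ℝ) = ((l:ℝ)-m) * (((l-(m+1))!) : ℝ) := by
      rw [show l - m = (l-(m+1))+1 from by omega, Nat.factorial_succ]
      push_cast
      have : ((l - (m+1) : ℕ) : ℝ) = (l:ℝ) - m - 1 := by
        push_cast [Nat.cast_sub (by omega : m + 1 ≤ l)]
        ring
      rw [this]
      ring
    have hfs2 : (((l+(m+1))!) : ℝ) = ((l:ℝ)+m+1) * (((l+m)!) : ℝ) := by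
      rw [show l + (m+1) = (l+m)+1 from by ring, Nat.factorial_succ]
      push_cast
      ring
    rw [hfs2]
    rw [hfs] at h1
    linear_combination (((l:ℝ)+m+1)) * h1

lemma eval_iteratedDeriv (p : Polynomial ℝ) (n : ℕ) :
    iteratedDeriv n (fun x => p.eval x) = fun x => (derivative^[n] p).eval x := by
  induction n with
  | zero => simp
  | succ n ih =>
    rw [iteratedDeriv_succ, ih]
    funext x
    rw [Polynomial.deriv, Function.iterate_succ_apply']

lemma legendre_iter (m l : ℕ) : iteratedDeriv m (legendreP l) =
    fun x => (1 / (2^l * (l ! : ℝ))) * (Rp (l+m) l).eval x := by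
  have h0 : legendreP l = fun x => (C (1/(2^l * (l ! : ℝ))) * Rp l l).eval x := by
    funext x
    unfold legendreP
    have he : (fun y : ℝ => (y^2-1)^l) = fun y => (((X:Polynomial ℝ)^2-1)^l).eval y := by
      funext y; simp
    rw [he, eval_iteratedDeriv]
    simp [Rp]
  rw [h0, eval_iteratedDeriv]
  funext x
  rw [Polynomial.iterate_derivative_C_mul]
  simp only [eval_mul, eval_C]
  congr 2
  unfold Rp
  rw [← Function.iterate_add_apply]
  congr 1
  omega


end NalfOrthAux

open Polynomial NalfOrthAux in
theorem nalf_orthonormal (m l l' : ℕ) (hl : m ≤ l) (hl' : m ≤ l') :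
    ∫ x in (-1 : ℝ)..1, nalf m l x * nalf m l' x = if l = l' then 1 else 0 := by
  set Nl : ℝ := (2 * l + 1) / 2 * ((l - m)! : ℝ) / ((l + m)! : ℝ) with hNl
  set Nl' : ℝ := (2 * l' + 1) / 2 * ((l' - m)! : ℝ) / ((l' + m)! : ℝ) with hNl'
  set cl : ℝ := 1 / (2^l * (l ! : ℝ)) with hcl
  set cl' : ℝ := 1 / (2^l' * (l' ! : ℝ)) with hcl'
  set K : ℝ := (Real.sqrt Nl * Real.sqrt Nl') * (cl * cl') with hK
  set W : Polynomial ℝ := (1-X^2)^m * (Rp (l+m) l * Rp (l'+m) l') with hW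
  have hEq : Set.EqOn (fun x => nalf m l x * nalf m l' x) (fun x => K * W.eval x)
      (Set.uIcc (-1 : ℝ) 1) := by
    intro x hx
    rw [Set.uIcc_of_le (by norm_num : (-1:ℝ) ≤ 1)] at hx
    have hx2 : (0:ℝ) ≤ 1 - x^2 := by nlinarith [hx.1, hx.2]
    have ht : (1 - x^2) ^ ((m:ℝ)/2) * (1 - x^2) ^ ((m:ℝ)/2) = (1-x^2)^m := by
      rcases Nat.eq_zero_or_pos m with hm | hm
      · subst hm; simp
      · have hmne : (m:ℝ)/2 + (m:ℝ)/2 ≠ 0 := by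
          have he : (m:ℝ)/2 + (m:ℝ)/2 = (m:ℝ) := by ring
          rw [he]
          exact Nat.cast_ne_zero.2 hm.ne'
        rw [← Real.rpow_add' hx2 hmne,
          show (m:ℝ)/2+(m:ℝ)/2 = ((m:ℕ):ℝ) from by push_cast; ring, Real.rpow_natCast]
    simp only [nalf, legendre_iter]
    simp only [hW, eval_mul, eval_pow, eval_sub, eval_one, eval_X, hK]
    rw [← ht]
    ring
  rw [intervalIntegral.integral_congr hEq, intervalIntegral.integral_const_mul]
  have hIp : (∫ x in (-1:ℝ)..1, W.eval x) = Ip W := rfl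
  rw [hIp, hW, Iclosed l l' m]
  by_cases hll : l = l'
  · subst hll
    rw [if_pos rfl, diag]
    -- constants
    have hA : ((l !) : ℝ) ≠ 0 := by positivity
    have hB : (((l-m)!) : ℝ) ≠ 0 := by positivity
    have hD : (((l+m)!) : ℝ) ≠ 0 := by positivity
    have hE : (((2*l)!) : ℝ) ≠ 0 := by positivity
    have hP := prodcast l m hl
    have hJ := Jval l
    have hfac : (((2*l+1)!) : ℝ) = (2*(l:ℝ)+1) * (((2*l)!) : ℝ) := by
      rw [Nat.factorial_succ]; push_cast; ring
    rw [hfac] at hJ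
    have hsq : Real.sqrt Nl * Real.sqrt Nl = Nl := by
      apply Real.mul_self_sqrt
      rw [hNl]; positivity
    set Pr : ℝ := ∏ j ∈ Finset.range m, (((l:ℝ)+j+1) * ((l:ℝ)-j)) with hPrdef
    set J : ℝ := Ip ((1-X^2)^l) with hJdef
    have hPr2 : Pr = (((l+m)!):ℝ) / (((l-m)!):ℝ) := by
      rw [eq_div_iff hB]
      exact mul_right_cancel₀ hA hP
    have hJ2 : J = 2^(2*l+1) * ((l !):ℝ)^2 / ((2*(l:ℝ)+1) * (((2*l)!):ℝ)) := by
      rw [eq_div_iff (by positivity)]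
      exact hJ
    have hNN : Nl' = Nl := by rw [hNl', hNl]
    have hcc : cl' = cl := by rw [hcl', hcl]
    rw [hK, hNN, hcc, hsq, hPr2, hJ2, hNl, hcl]
    have h2l : (2:ℝ)^l ≠ 0 := by positivity
    have h2l1 : (2*(l:ℝ)+1) ≠ 0 := by positivity
    field_simp
    ring
  · rw [if_neg hll]
    have hc : Ip (Rp l l * Rp l' l') = 0 := by
      rcases Nat.lt_or_ge l' l with h | h
      · exact cross l l' h
      · have hlt : l < l' := by omega
        have := cross l' l hlt
        rw [show Rp l l * Rp l' l' = Rp l' l' * Rp l l from mul_comm _ _]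
        exact this
    rw [hc, mul_zero, mul_zero]
end
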